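/- arXiv:2601.00447 — 9 statements merged into one kernel-verified Lean document; each statement's English description precedes it below -/
import Mathlib

section
/- For every α ≥ 1 and β ≥ 1, there exists a semi-centroid clustering instance — given by a finite set N of n agents, center set M = N, a pseudometric d on N, and an integer k ≥ 1 — such that no clustering of that instance is simultaneously in the α-core with respect to the centroid loss ℓ^c_i(C,x) = d(i,x) and in the β-core with respect to the non-centroid loss ℓ^m_i(C,x) = max_{j∈C} d(i,j). -/
open Finset

/-- A pseudometric on a set `X`, valued in `ℝ≥0`. -/
def IsPseudometric {X : Type*} (d : X → X → NNReal) : Prop :=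
  (∀ x, d x x = 0) ∧ (∀ x y, d x y = d y x) ∧ (∀ x y z, d x y ≤ d x z + d z y)

/-- A clustering: `k` clusters `(part t, cent t)` whose member sets partition the agents. -/
structure Clustering (N M : Type*) (k : ℕ) where
  part : Fin k → Finset N
  cent : Fin k → M
  partition : ∀ i : N, ∃! t : Fin k, i ∈ part t

/-- The (unique) index of the cluster containing agent `i`. -/
noncomputable def Clustering.idx {N M : Type*} {k : ℕ} (X : Clustering N M k) (i : N) :
    Fin k :=
  (X.partition i).exists.choose

/-- The loss of agent `i` under clustering `X`, for loss functions `l`. -/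
noncomputable def Clustering.loss {N M : Type*} {k : ℕ} (X : Clustering N M k)
    (l : N → Finset N → M → ℝ) (i : N) : ℝ :=
  l i (X.part (X.idx i)) (X.cent (X.idx i))

/-- `X` is in the `α`-core: no group `S` with `|S| ≥ n/k` and center `y` such that
`α·ℓ_i(S,y) < ℓ_i(X)` for every `i ∈ S`. -/
def InCore {N M : Type*} [Fintype N] {k : ℕ} (X : Clustering N M k)
    (l : N → Finset N → M → ℝ) (α : ℝ) : Prop :=
  ¬ ∃ (S : Finset N) (y : M), (Fintype.card N : ℝ) / (k : ℝ) ≤ (S.card : ℝ) ∧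
      ∀ i ∈ S, α * l i S y < X.loss l i

/-- `X` is `α`-FJR: no group `S` with `|S| ≥ n/k` and center `y` such that
`α·ℓ_i(S,y) < min_{j∈S} ℓ_j(X)` for every `i ∈ S`. -/
def IsFJR {N M : Type*} [Fintype N] {k : ℕ} (X : Clustering N M k)
    (l : N → Finset N → M → ℝ) (α : ℝ) : Prop :=
  ¬ ∃ (S : Finset N) (y : M), (Fintype.card N : ℝ) / (k : ℝ) ≤ (S.card : ℝ) ∧
      ∀ i ∈ S, ∀ j ∈ S, α * l i S y < X.loss l j

/-! ### Auxiliary construction: two "comets" on a line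

Six agents at positions `0, P, P+1, D, D+P, D+P+1` on the real line, where `P = β+1`
and `D = αβ+2α+2β+4`, with `k = 3` clusters.  Agents `1,2` (resp. `4,5`) form a close
pair at distance `1`, and agent `0` (resp. `3`) is a "tail" at distance `P` from its pair;
the two comets are far apart. -/

/-- Positions of the six agents on the real line. -/
def cometPts (α β : ℝ) : Fin 6 → ℝ
  | ⟨0, _⟩ => 0
  | ⟨1, _⟩ => β + 1
  | ⟨2, _⟩ => β + 2
  | ⟨3, _⟩ => α * β + 2 * α + 2 * β + 4
  | ⟨4, _⟩ => α * β + 2 * α + 3 * β + 5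
  | ⟨5, _⟩ => α * β + 2 * α + 3 * β + 6

lemma cometPts_inj {α β : ℝ} (hα : 1 ≤ α) (hβ : 1 ≤ β) :
    ∀ i j : Fin 6, cometPts α β i = cometPts α β j → i = j := by
  have hab : (1 : ℝ) ≤ α * β := by nlinarith
  intro i j h
  fin_cases i <;> fin_cases j <;> simp_all [cometPts] <;> nlinarith

lemma comet_pair_left {α β : ℝ} (hα : 1 ≤ α) (hβ : 1 ≤ β) :
    ∀ i j : Fin 6, (i = 1 ∨ i = 2) → |cometPts α β i - cometPts α β j| ≤ β →
      (j = 1 ∨ j = 2) := by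
  have hab : (1 : ℝ) ≤ α * β := by nlinarith
  intro i j hi h
  rcases abs_le.mp h with ⟨h1, h2⟩
  clear h
  rcases hi with hi | hi <;> subst hi <;> fin_cases j <;> simp_all [cometPts] <;>
    first
    | decide
    | nlinarith

lemma comet_pair_right {α β : ℝ} (hα : 1 ≤ α) (hβ : 1 ≤ β) :
    ∀ i j : Fin 6, (i = 4 ∨ i = 5) → |cometPts α β i - cometPts α β j| ≤ β →
      (j = 4 ∨ j = 5) := by
  have hab : (1 : ℝ) ≤ α * β := by nlinarith
  intro i j hi h
  rcases abs_le.mp h with ⟨h1, h2⟩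
  clear h
  rcases hi with hi | hi <;> subst hi <;> fin_cases j <;> simp_all [cometPts] <;>
    first
    | decide
    | nlinarith

lemma comet_tail_left {α β : ℝ} (hα : 1 ≤ α) (hβ : 1 ≤ β) :
    ∀ j : Fin 6, |cometPts α β 0 - cometPts α β j| ≤ α * (β + 2) →
      (j = 0 ∨ j = 1 ∨ j = 2) := by
  have hab : (1 : ℝ) ≤ α * β := by nlinarith
  intro j h
  rcases abs_le.mp h with ⟨h1, h2⟩
  clear h
  fin_cases j <;> simp_all [cometPts] <;>
    first
    | decide
    | nlinarith

lemma comet_tail_right {α β : ℝ} (hα : 1 ≤ α) (hβ : 1 ≤ β) :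
    ∀ j : Fin 6, |cometPts α β 3 - cometPts α β j| ≤ α * (β + 2) →
      (j = 3 ∨ j = 4 ∨ j = 5) := by
  have hab : (1 : ℝ) ≤ α * β := by nlinarith
  intro j h
  rcases abs_le.mp h with ⟨h1, h2⟩
  clear h
  fin_cases j <;> simp_all [cometPts] <;>
    first
    | decide
    | nlinarith

lemma fin3_pigeonhole4 :
    ∀ p q r s : Fin 3, p ≠ q → p ≠ r → p ≠ s → q ≠ r → q ≠ s → r ≠ s → False := by
  intro p q r s h1 h2 h3 h4 h5 h6
  have hp := p.isLt
  have hq := q.isLt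
  have hr := r.isLt
  have hs := s.isLt
  simp only [Ne, Fin.ext_iff] at h1 h2 h3 h4 h5 h6
  omega

lemma fin3_forced :
    ∀ p q r s : Fin 3, p ≠ q → r ≠ p → r ≠ q → s ≠ p → s ≠ q → s = r := by
  intro p q r s h1 h2 h3 h4 h5
  have hp := p.isLt
  have hq := q.isLt
  have hr := r.isLt
  have hs := s.isLt
  simp only [Ne, Fin.ext_iff] at h1 h2 h3 h4 h5 ⊢
  omega

/-- For every `α, β ≥ 1`, there is a semi-centroid clustering instance (with `M = N` and
a pseudometric `d` on `N`) in which no clustering is simultaneously in the `α`-core with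
respect to the centroid loss and in the `β`-core with respect to the non-centroid loss. -/
theorem no_simultaneous_core (α β : ℝ) (hα : 1 ≤ α) (hβ : 1 ≤ β) :
    ∃ (n k : ℕ) (d : Fin n → Fin n → NNReal),
      1 ≤ n ∧ 1 ≤ k ∧ IsPseudometric d ∧
      ∀ X : Clustering (Fin n) (Fin n) k,
        ¬ (InCore X (fun i _C x => ((d i x : NNReal) : ℝ)) α ∧
           InCore X (fun i C _x => ((C.sup fun j => d i j : NNReal) : ℝ)) β) := by
  classical
  set p : Fin 6 → ℝ := cometPts α β with hp
  refine ⟨6, 3, fun i j => Real.nnabs (p i - p j), by norm_num, by norm_num, ?_, ?_⟩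
  · refine ⟨fun x => by simp, fun x y => ?_, fun x y z => ?_⟩
    · apply NNReal.coe_injective
      simp only [Real.coe_nnabs]
      exact abs_sub_comm _ _
    · rw [← NNReal.coe_le_coe, NNReal.coe_add]
      simp only [Real.coe_nnabs]
      exact abs_sub_le _ _ _
  · rintro X ⟨hC, hN⟩
    have hmem : ∀ i : Fin 6, i ∈ X.part (X.idx i) := fun i =>
      (X.partition i).exists.choose_spec
    -- unpacked core conditions
    have hC' : ∀ (S : Finset (Fin 6)) (y : Fin 6), (2 : ℝ) ≤ (S.card : ℝ) →
        ∃ i ∈ S, X.loss (fun i _C x => ((Real.nnabs (p i - p x) : NNReal) : ℝ)) i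
          ≤ α * |p i - p y| := by
      intro S y hS
      by_contra h
      push_neg at h
      refine hC ⟨S, y, ?_, fun i hi => ?_⟩
      · rw [Fintype.card_fin]
        calc ((6 : ℕ) : ℝ) / ((3 : ℕ) : ℝ) = 2 := by norm_num
        _ ≤ (S.card : ℝ) := hS
      · have := h i hi
        simpa [Real.coe_nnabs] using this
    have hN' : ∀ (S : Finset (Fin 6)) (y : Fin 6), (2 : ℝ) ≤ (S.card : ℝ) →
        ∃ i ∈ S, X.loss (fun i C _x =>
            ((C.sup fun j => Real.nnabs (p i - p j) : NNReal) : ℝ)) i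
          ≤ β * ((S.sup fun j => Real.nnabs (p i - p j) : NNReal) : ℝ) := by
      intro S y hS
      by_contra h
      push_neg at h
      refine hN ⟨S, y, ?_, fun i hi => h i hi⟩
      rw [Fintype.card_fin]
      calc ((6 : ℕ) : ℝ) / ((3 : ℕ) : ℝ) = 2 := by norm_num
      _ ≤ (S.card : ℝ) := hS
    -- the centroid loss of an agent
    have hLc : ∀ i : Fin 6,
        X.loss (fun i _C x => ((Real.nnabs (p i - p x) : NNReal) : ℝ)) i
          = |p i - p (X.cent (X.idx i))| := by
      intro i
      simp only [Clustering.loss, Real.coe_nnabs]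
    -- Non-centroid core: for a pair u,v at distance 1, some member's whole cluster
    -- is within β of it.
    have pairN : ∀ u v : Fin 6, u ≠ v → |p u - p v| = 1 →
        ∃ x₀ ∈ ({u, v} : Finset (Fin 6)),
          ∀ j ∈ X.part (X.idx x₀), |p x₀ - p j| ≤ β := by
      intro u v huv habs
      obtain ⟨i, hi, hLi⟩ := hN' {u, v} 0 (by
        rw [Finset.card_insert_of_notMem (by simp [huv]), Finset.card_singleton]
        norm_num)
      refine ⟨i, hi, fun j hj => ?_⟩
      have h1 : |p i - p u| ≤ 1 := by
        rcases Finset.mem_insert.mp hi with h | h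
        · rw [h, sub_self, abs_zero]; norm_num
        · rw [Finset.mem_singleton.mp h, abs_sub_comm, habs]
      have h2 : |p i - p v| ≤ 1 := by
        rcases Finset.mem_insert.mp hi with h | h
        · rw [h, habs]
        · rw [Finset.mem_singleton.mp h, sub_self, abs_zero]; norm_num
      have hsup : ((({u, v} : Finset (Fin 6)).sup fun j =>
          Real.nnabs (p i - p j) : NNReal) : ℝ) ≤ 1 := by
        rw [Finset.sup_insert, Finset.sup_singleton, NNReal.coe_max]
        simp only [Real.coe_nnabs]
        exact max_le h1 h2
      have hloss : (((X.part (X.idx i)).sup fun j =>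
          Real.nnabs (p i - p j) : NNReal) : ℝ) ≤ β := by
        have heq : X.loss (fun i C _x =>
            ((C.sup fun j => Real.nnabs (p i - p j) : NNReal) : ℝ)) i
            = (((X.part (X.idx i)).sup fun j => Real.nnabs (p i - p j) : NNReal) : ℝ) := rfl
        rw [heq] at hLi
        have hb : β * ((({u, v} : Finset (Fin 6)).sup fun j =>
            Real.nnabs (p i - p j) : NNReal) : ℝ) ≤ β * 1 :=
          mul_le_mul_of_nonneg_left hsup (by linarith)
        linarith
      have hle : ((Real.nnabs (p i - p j) : NNReal) : ℝ)
          ≤ (((X.part (X.idx i)).sup fun j => Real.nnabs (p i - p j) : NNReal) : ℝ) :=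
        NNReal.coe_le_coe.mpr (Finset.le_sup (f := fun j => Real.nnabs (p i - p j)) hj)
      rw [Real.coe_nnabs] at hle
      linarith
    -- Centroid core analysis of a comet with tail `a` and pair `b, c`:
    -- either both pair members are the centers of their clusters,
    -- or the tail's center is within α(β+2).
    have pairC : ∀ a b c : Fin 6, a ≠ b → a ≠ c →
        |p a - p b| = β + 1 → |p a - p c| = β + 2 →
        (X.cent (X.idx b) = b ∧ X.cent (X.idx c) = c) ∨
          |p a - p (X.cent (X.idx a))| ≤ α * (β + 2) := by
      intro a b c hab hac habsb habsc
      obtain ⟨i, hi, hLi⟩ := hC' {a, b} b (by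
        rw [Finset.card_insert_of_notMem (by simp [hab]), Finset.card_singleton]
        norm_num)
      obtain ⟨i', hi', hLi'⟩ := hC' {a, c} c (by
        rw [Finset.card_insert_of_notMem (by simp [hac]), Finset.card_singleton]
        norm_num)
      rw [hLc] at hLi hLi'
      rcases Finset.mem_insert.mp hi with h | h
      · -- i = a : tail is served via center b
        right
        rw [h] at hLi
        rw [habsb] at hLi
        have : α * (β + 1) ≤ α * (β + 2) := by nlinarith
        linarith
      · have hib : i = b := Finset.mem_singleton.mp h
        rcases Finset.mem_insert.mp hi' with h' | h'
        · -- i' = a : tail served via center c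
          right
          rw [h'] at hLi'
          rw [habsc] at hLi'
          exact hLi'
        · have hic : i' = c := Finset.mem_singleton.mp h'
          left
          rw [hib] at hLi
          rw [hic] at hLi'
          rw [sub_self, abs_zero, mul_zero] at hLi hLi'
          have hb0 : |p b - p (X.cent (X.idx b))| = 0 :=
            le_antisymm hLi (abs_nonneg _)
          have hc0 : |p c - p (X.cent (X.idx c))| = 0 :=
            le_antisymm hLi' (abs_nonneg _)
          have hb1 : p (X.cent (X.idx b)) = p b := by
            have := abs_eq_zero.mp hb0
            linarith [sub_eq_zero.mp this]
          have hc1 : p (X.cent (X.idx c)) = p c := by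
            have := abs_eq_zero.mp hc0
            linarith [sub_eq_zero.mp this]
          exact ⟨cometPts_inj hα hβ _ _ hb1, cometPts_inj hα hβ _ _ hc1⟩
    -- numeric facts about positions
    have hd12 : |p 1 - p 2| = 1 := by
      simp only [hp, cometPts]
      norm_num
    have hd45 : |p 4 - p 5| = 1 := by
      simp only [hp, cometPts]
      norm_num
    have hd01 : |p 0 - p 1| = β + 1 := by
      simp only [hp, cometPts]
      rw [abs_sub_comm, abs_of_nonneg (by linarith)]
      ring
    have hd02 : |p 0 - p 2| = β + 2 := by
      simp only [hp, cometPts]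
      rw [abs_sub_comm, abs_of_nonneg (by linarith)]
      ring
    have hd34 : |p 3 - p 4| = β + 1 := by
      simp only [hp, cometPts]
      rw [abs_sub_comm, abs_of_nonneg (by linarith)]
      ring
    have hd35 : |p 3 - p 5| = β + 2 := by
      simp only [hp, cometPts]
      rw [abs_sub_comm, abs_of_nonneg (by linarith)]
      ring
    -- apply the analyses to both comets
    obtain ⟨x₀, hx₀mem, hx₀⟩ := pairN 1 2 (by decide) hd12
    obtain ⟨x₁, hx₁mem, hx₁⟩ := pairN 4 5 (by decide) hd45
    have hx₀12 : x₀ = 1 ∨ x₀ = 2 := by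
      rcases Finset.mem_insert.mp hx₀mem with h | h
      · exact Or.inl h
      · exact Or.inr (Finset.mem_singleton.mp h)
    have hx₁45 : x₁ = 4 ∨ x₁ = 5 := by
      rcases Finset.mem_insert.mp hx₁mem with h | h
      · exact Or.inl h
      · exact Or.inr (Finset.mem_singleton.mp h)
    have hsubL : ∀ j ∈ X.part (X.idx x₀), j = 1 ∨ j = 2 := fun j hj =>
      comet_pair_left hα hβ x₀ j hx₀12 (hx₀ j hj)
    have hsubR : ∀ j ∈ X.part (X.idx x₁), j = 4 ∨ j = 5 := fun j hj =>
      comet_pair_right hα hβ x₁ j hx₁45 (hx₁ j hj)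
    have hcomet1 := pairC 0 1 2 (by decide) (by decide) hd01 hd02
    have hcomet2 := pairC 3 4 5 (by decide) (by decide) hd34 hd35
    -- membership of x₀'s cluster excludes agents 0 and 3, etc.
    have hs0 : ∀ t : Fin 3, (0 : Fin 6) ∈ X.part t → X.idx x₀ ≠ t := by
      intro t h0 hEq
      rcases hsubL 0 (hEq ▸ h0) with h | h <;> exact absurd h (by decide)
    have hs3 : ∀ t : Fin 3, (3 : Fin 6) ∈ X.part t → X.idx x₀ ≠ t := by
      intro t h0 hEq
      rcases hsubL 3 (hEq ▸ h0) with h | h <;> exact absurd h (by decide)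
    have hs'0 : ∀ t : Fin 3, (0 : Fin 6) ∈ X.part t → X.idx x₁ ≠ t := by
      intro t h0 hEq
      rcases hsubR 0 (hEq ▸ h0) with h | h <;> exact absurd h (by decide)
    have hs'3 : ∀ t : Fin 3, (3 : Fin 6) ∈ X.part t → X.idx x₁ ≠ t := by
      intro t h0 hEq
      rcases hsubR 3 (hEq ▸ h0) with h | h <;> exact absurd h (by decide)
    have hs'1 : ∀ t : Fin 3, (1 : Fin 6) ∈ X.part t → X.idx x₁ ≠ t := by
      intro t h0 hEq
      rcases hsubR 1 (hEq ▸ h0) with h | h <;> exact absurd h (by decide)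
    have hs'2 : ∀ t : Fin 3, (2 : Fin 6) ∈ X.part t → X.idx x₁ ≠ t := by
      intro t h0 hEq
      rcases hsubR 2 (hEq ▸ h0) with h | h <;> exact absurd h (by decide)
    have hs4 : ∀ t : Fin 3, (4 : Fin 6) ∈ X.part t → X.idx x₀ ≠ t := by
      intro t h0 hEq
      rcases hsubL 4 (hEq ▸ h0) with h | h <;> exact absurd h (by decide)
    have hs5 : ∀ t : Fin 3, (5 : Fin 6) ∈ X.part t → X.idx x₀ ≠ t := by
      intro t h0 hEq
      rcases hsubL 5 (hEq ▸ h0) with h | h <;> exact absurd h (by decide)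
    rcases hcomet1 with ⟨h1c, h2c⟩ | h0c
    · rcases hcomet2 with ⟨h4c, h5c⟩ | h3c
      · -- four distinct cluster centers: impossible with k = 3
        have h12 : X.idx 1 ≠ X.idx 2 := by
          intro h
          rw [h] at h1c
          exact absurd (h1c.symm.trans h2c) (by decide)
        have h14 : X.idx 1 ≠ X.idx 4 := by
          intro h
          rw [h] at h1c
          exact absurd (h1c.symm.trans h4c) (by decide)
        have h15 : X.idx 1 ≠ X.idx 5 := by
          intro h
          rw [h] at h1c
          exact absurd (h1c.symm.trans h5c) (by decide)
        have h24 : X.idx 2 ≠ X.idx 4 := by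
          intro h
          rw [h] at h2c
          exact absurd (h2c.symm.trans h4c) (by decide)
        have h25 : X.idx 2 ≠ X.idx 5 := by
          intro h
          rw [h] at h2c
          exact absurd (h2c.symm.trans h5c) (by decide)
        have h45 : X.idx 4 ≠ X.idx 5 := by
          intro h
          rw [h] at h4c
          exact absurd (h4c.symm.trans h5c) (by decide)
        exact fin3_pigeonhole4 _ _ _ _ h12 h14 h15 h24 h25 h45
      · -- comet 1 owns two clusters, comet 2's tail center lies in comet 2
        have hc3 := comet_tail_right hα hβ (X.cent (X.idx 3)) h3c
        have h12 : X.idx 1 ≠ X.idx 2 := by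
          intro h
          rw [h] at h1c
          exact absurd (h1c.symm.trans h2c) (by decide)
        have h31 : X.idx 3 ≠ X.idx 1 := by
          intro h
          rw [h, h1c] at hc3
          exact absurd hc3 (by decide)
        have h32 : X.idx 3 ≠ X.idx 2 := by
          intro h
          rw [h, h2c] at hc3
          exact absurd hc3 (by decide)
        have hx₁1 : X.idx x₁ ≠ X.idx 1 := hs'1 (X.idx 1) (hmem 1)
        have hx₁2 : X.idx x₁ ≠ X.idx 2 := hs'2 (X.idx 2) (hmem 2)
        have hforced : X.idx x₁ = X.idx 3 :=
          fin3_forced (X.idx 1) (X.idx 2) (X.idx 3) (X.idx x₁) h12 h31 h32 hx₁1 hx₁2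
        exact hs'3 (X.idx 3) (hmem 3) hforced
    · rcases hcomet2 with ⟨h4c, h5c⟩ | h3c
      · -- symmetric case
        have hc0 := comet_tail_left hα hβ (X.cent (X.idx 0)) h0c
        have h45 : X.idx 4 ≠ X.idx 5 := by
          intro h
          rw [h] at h4c
          exact absurd (h4c.symm.trans h5c) (by decide)
        have h04 : X.idx 0 ≠ X.idx 4 := by
          intro h
          rw [h, h4c] at hc0
          exact absurd hc0 (by decide)
        have h05 : X.idx 0 ≠ X.idx 5 := by
          intro h
          rw [h, h5c] at hc0
          exact absurd hc0 (by decide)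
        have hx₀4 : X.idx x₀ ≠ X.idx 4 := hs4 (X.idx 4) (hmem 4)
        have hx₀5 : X.idx x₀ ≠ X.idx 5 := hs5 (X.idx 5) (hmem 5)
        have hforced : X.idx x₀ = X.idx 0 :=
          fin3_forced (X.idx 4) (X.idx 5) (X.idx 0) (X.idx x₀) h45 h04 h05 hx₀4 hx₀5
        exact hs0 (X.idx 0) (hmem 0) hforced
      · -- both tails have centers in their own comets
        have hc0 := comet_tail_left hα hβ (X.cent (X.idx 0)) h0c
        have hc3 := comet_tail_right hα hβ (X.cent (X.idx 3)) h3c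
        have h03 : X.idx 0 ≠ X.idx 3 := by
          intro h
          rw [h] at hc0
          rcases hc0 with h0 | h0 | h0 <;> rw [h0] at hc3 <;>
            exact absurd hc3 (by decide)
        have hx₀0 : X.idx x₀ ≠ X.idx 0 := hs0 (X.idx 0) (hmem 0)
        have hx₀3 : X.idx x₀ ≠ X.idx 3 := hs3 (X.idx 3) (hmem 3)
        have hx₁0 : X.idx x₁ ≠ X.idx 0 := hs'0 (X.idx 0) (hmem 0)
        have hx₁3 : X.idx x₁ ≠ X.idx 3 := hs'3 (X.idx 3) (hmem 3)
        have hforced : X.idx x₁ = X.idx x₀ :=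
          fin3_forced (X.idx 0) (X.idx 3) (X.idx x₀) (X.idx x₁) h03 hx₀0 hx₀3 hx₁0 hx₁3
        have : x₀ ∈ X.part (X.idx x₁) := by
          rw [hforced]
          exact hmem x₀
        rcases hsubR x₀ this with h | h <;> rcases hx₀12 with h' | h' <;>
          rw [h'] at h <;> exact absurd h (by decide)
end

section
/- Let N be a finite set of agents, M a set of centers, d^m a pseudometric on N, and d^c a pseudometric on N ⊔ M, inducing the dual metric loss ℓ_i(C,x) = max_{j∈C} d^m(i,j) + d^c(i,x). Let S ⊆ N be nonempty, y ∈ M, and set r = max_{i∈S} ℓ_i(S,y). Let C ⊆ N with |C| ≥ 2 satisfy max_{i,j∈C} d_y(i,j) ≤ 2·max_{i,j∈S} d_y(i,j), where d_y is the crafted distance for y. Then max_{i∈C} ℓ_i(C,y) ≤ 4r. -/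
open Finset

/-- The dual metric loss: `ℓ_i(C,x) = max_{j∈C} d^m(i,j) + d^c(i,x)`. -/
noncomputable def dualLoss {N M : Type*} (dm : N → N → NNReal)
    (dc : N ⊕ M → N ⊕ M → NNReal) (i : N) (C : Finset N) (x : M) : ℝ :=
  ((C.sup fun j => dm i j : NNReal) : ℝ) + ((dc (Sum.inl i) (Sum.inr x) : NNReal) : ℝ)

/-- The crafted distance `d_y` on `N`: `d_y(i,i) = 0` and
`d_y(i,j) = d^m(i,j) + d^c(i,y) + d^c(j,y)` for `i ≠ j`. -/
noncomputable def crafted {N M : Type*} [DecidableEq N] (dm : N → N → NNReal)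
    (dc : N ⊕ M → N ⊕ M → NNReal) (y : M) (i j : N) : NNReal :=
  if i = j then 0 else dm i j + dc (Sum.inl i) (Sum.inr y) + dc (Sum.inl j) (Sum.inr y)

/-- If `r = max_{i∈S} ℓ_i(S,y)` for a nonempty `S`, and `C` with `|C| ≥ 2` satisfies
`max_{i,j∈C} d_y(i,j) ≤ 2·max_{i,j∈S} d_y(i,j)`, then `max_{i∈C} ℓ_i(C,y) ≤ 4r`. -/
theorem loss_le_four_r {N M : Type*} [Fintype N] [DecidableEq N]
    (dm : N → N → NNReal) (dc : N ⊕ M → N ⊕ M → NNReal)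
    (hdm : IsPseudometric dm) (hdc : IsPseudometric dc)
    (S : Finset N) (hS : S.Nonempty) (y : M)
    (r : ℝ) (hr : r = S.sup' hS fun i => dualLoss dm dc i S y)
    (C : Finset N) (hC : 2 ≤ C.card)
    (hCS : ((C ×ˢ C).sup fun p => crafted dm dc y p.1 p.2) ≤
           2 * ((S ×ˢ S).sup fun p => crafted dm dc y p.1 p.2)) :
    ∀ i ∈ C, dualLoss dm dc i C y ≤ 4 * r := by
  intro i hi
  have hCne : C.Nonempty := Finset.card_pos.mp (by omega)
  -- r is an upper bound on each loss in S, and r ≥ 0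
  have hle : ∀ a ∈ S, dualLoss dm dc a S y ≤ r := by
    intro a ha; rw [hr]; exact Finset.le_sup' (fun i => dualLoss dm dc i S y) ha
  have hr0 : 0 ≤ r := by
    obtain ⟨a, ha⟩ := hS
    have h1 := hle a ha
    have h2 : (0:ℝ) ≤ dualLoss dm dc a S y := by
      unfold dualLoss; positivity
    linarith
  -- crafted distances within S are ≤ 2r
  have hS2 : ∀ a ∈ S, ∀ b ∈ S, ((crafted dm dc y a b : NNReal) : ℝ) ≤ 2 * r := by
    intro a ha b hb
    by_cases hab : a = b
    · simp [crafted, hab]; linarith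
    · have hla := hle a ha
      have hlb := hle b hb
      unfold dualLoss at hla hlb
      have h1' : dm a b ≤ S.sup fun j => dm a j := Finset.le_sup (f := fun j => dm a j) hb
      have h1 : ((dm a b : NNReal) : ℝ) ≤ ((S.sup fun j => dm a j : NNReal) : ℝ) :=
        NNReal.coe_le_coe.mpr h1'
      have h2 : (0:ℝ) ≤ ((S.sup fun j => dm b j : NNReal) : ℝ) := NNReal.coe_nonneg _
      simp only [crafted, hab, if_false]
      push_cast
      linarith
  -- sup over S×S is ≤ 2r
  have hSS : (((S ×ˢ S).sup fun p => crafted dm dc y p.1 p.2 : NNReal) : ℝ) ≤ 2 * r := by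
    obtain ⟨p, hp, hpe⟩ := Finset.exists_mem_eq_sup (S ×ˢ S) (hS.product hS)
      (fun p => crafted dm dc y p.1 p.2)
    rw [hpe]
    obtain ⟨hp1, hp2⟩ := Finset.mem_product.mp hp
    exact hS2 p.1 hp1 p.2 hp2
  -- sup over C×C is ≤ 4r
  have hCC : ∀ a ∈ C, ∀ b ∈ C, ((crafted dm dc y a b : NNReal) : ℝ) ≤ 4 * r := by
    intro a ha b hb
    have h1 : crafted dm dc y a b ≤ (C ×ˢ C).sup fun p => crafted dm dc y p.1 p.2 :=
      Finset.le_sup (f := fun p => crafted dm dc y p.1 p.2)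
        (show (a, b) ∈ C ×ˢ C from Finset.mem_product.mpr ⟨ha, hb⟩)
    have h2 : ((crafted dm dc y a b : NNReal) : ℝ) ≤
        (((S ×ˢ S).sup fun p => crafted dm dc y p.1 p.2 : NNReal) : ℝ) * 2 := by
      have := NNReal.coe_le_coe.mpr (h1.trans hCS)
      push_cast at this
      linarith
    linarith
  -- finish
  obtain ⟨j0, hj0, hje⟩ := Finset.exists_mem_eq_sup C hCne (fun j => dm i j)
  unfold dualLoss
  rw [hje]
  by_cases hij : i = j0
  · subst hij
    rw [hdm.1 i]
    obtain ⟨j, hj, hji⟩ := Finset.exists_mem_ne (show 1 < C.card by omega) i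
    have h1 : dc (Sum.inl i) (Sum.inr y) ≤ crafted dm dc y i j := by
      simp only [crafted, (Ne.symm hji : ¬ i = j), if_false]
      calc dc (Sum.inl i) (Sum.inr y) ≤ dm i j + dc (Sum.inl i) (Sum.inr y) := le_add_self
        _ ≤ dm i j + dc (Sum.inl i) (Sum.inr y) + dc (Sum.inl j) (Sum.inr y) := le_add_of_le_of_nonneg le_rfl zero_le
    have h2 := (NNReal.coe_le_coe.mpr h1).trans (hCC i hi j hj)
    simpa using h2
  · have h1 : (dm i j0 + dc (Sum.inl i) (Sum.inr y) : NNReal) ≤ crafted dm dc y i j0 := by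
      simp only [crafted, hij, if_false]
      exact le_add_of_le_of_nonneg le_rfl zero_le
    have h2 := (NNReal.coe_le_coe.mpr h1).trans (hCC i hi j0 hj0)
    push_cast at h2
    linarith
end

section
/- For every semi-centroid clustering instance equipped with the weighted single metric loss with parameter λ ∈ (0,1] — determined by a pseudometric d on N ⊔ M via ℓ_i(C,x) = λ·max_{j∈C} d(i,j) + (1−λ)·d(i,x) — there exists a clustering that is in the (2/λ)-core. -/
open Finset

/-- The weighted single metric loss:
`ℓ_i(C,x) = λ·max_{j∈C} d(i,j) + (1−λ)·d(i,x)`. -/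
noncomputable def wLoss {N M : Type*} (d : N ⊕ M → N ⊕ M → NNReal) (lam : ℝ)
    (i : N) (C : Finset N) (x : M) : ℝ :=
  lam * ((C.sup fun j => d (Sum.inl i) (Sum.inl j) : NNReal) : ℝ) +
    (1 - lam) * ((d (Sum.inl i) (Sum.inr x) : NNReal) : ℝ)

namespace CoreAux

variable {N M : Type*}

noncomputable def qmax (d : N ⊕ M → N ⊕ M → NNReal) (lam : ℝ) (C : Finset N) (x : M) : ℝ :=
  if h : C.Nonempty then C.sup' h (fun i => wLoss d lam i C x) else 0

lemma wLoss_le_qmax {d : N ⊕ M → N ⊕ M → NNReal} {lam : ℝ} {C : Finset N} {x : M} {i : N}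
    (hi : i ∈ C) : wLoss d lam i C x ≤ qmax d lam C x := by
  rw [qmax, dif_pos ⟨i, hi⟩]; exact Finset.le_sup' (fun i => wLoss d lam i C x) hi

lemma qmax_le {d : N ⊕ M → N ⊕ M → NNReal} {lam : ℝ} {C : Finset N} {x : M}
    (hC : C.Nonempty) {r : ℝ} (h : ∀ i ∈ C, wLoss d lam i C x ≤ r) :
    qmax d lam C x ≤ r := by
  rw [qmax, dif_pos hC]; exact Finset.sup'_le _ _ h

def unionF [DecidableEq N] (L : List (Finset N × M)) : Finset N :=
  L.foldr (fun p acc => p.1 ∪ acc) ∅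

lemma mem_unionF [DecidableEq N] {L : List (Finset N × M)} {i : N} :
    i ∈ unionF L ↔ ∃ p ∈ L, i ∈ p.1 := by
  induction L with
  | nil => simp [unionF]
  | cons p L ih => simp only [unionF, List.foldr] at ih ⊢; simp [Finset.mem_union, ih]

lemma exists_first {α : Type*} {P : α → Prop} {L : List α} (h : ∃ p ∈ L, P p) :
    ∃ L1 p L2, L = L1 ++ p :: L2 ∧ P p ∧ ∀ q ∈ L1, ¬ P q := by
  induction L with
  | nil => simp at h
  | cons a L ih =>
    by_cases ha : P a
    · exact ⟨[], a, L, rfl, ha, by simp⟩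
    · obtain ⟨p, hp, hP⟩ := h
      rcases List.mem_cons.1 hp with rfl | hp'
      · exact absurd hP ha
      · obtain ⟨L1, q, L2, hL, hq, hnot⟩ := ih ⟨p, hp', hP⟩
        refine ⟨a :: L1, q, L2, by simp [hL], hq, ?_⟩
        rintro r hr
        rcases List.mem_cons.1 hr with rfl | hr'
        · exact ha
        · exact hnot r hr'

lemma key {d : N ⊕ M → N ⊕ M → NNReal} (hd : IsPseudometric d) {lam : ℝ}
    (hlam0 : 0 < lam) (hlam1 : lam ≤ 1) {S : Finset N} {y : M} {i0 i1 : N}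
    (hi0 : i0 ∈ S) (hi1 : i1 ∈ S) :
    wLoss d lam i0 S y ≤ 2 / lam * wLoss d lam i1 S y := by
  obtain ⟨hrefl, hsymm, htri⟩ := hd
  set a : NNReal := S.sup (fun j => d (Sum.inl i1) (Sum.inl j)) with ha
  set b : NNReal := d (Sum.inl i1) (Sum.inr y) with hb
  set A0 : NNReal := S.sup (fun j => d (Sum.inl i0) (Sum.inl j)) with hA0
  set b0 : NNReal := d (Sum.inl i0) (Sum.inr y) with hb0
  have hd10 : d (Sum.inl i1) (Sum.inl i0) ≤ a :=
    Finset.le_sup (f := fun j => d (Sum.inl i1) (Sum.inl j)) hi0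
  have hA0le : A0 ≤ a + a := by
    refine Finset.sup_le fun j hj => ?_
    calc d (Sum.inl i0) (Sum.inl j) ≤ d (Sum.inl i0) (Sum.inl i1) + d (Sum.inl i1) (Sum.inl j) :=
          htri _ _ _
      _ ≤ a + a := by
          refine add_le_add ?_ (Finset.le_sup (f := fun j => d (Sum.inl i1) (Sum.inl j)) hj)
          rw [hsymm]; exact hd10
  have hb0le : b0 ≤ a + b := by
    calc b0 ≤ d (Sum.inl i0) (Sum.inl i1) + d (Sum.inl i1) (Sum.inr y) := htri _ _ _
      _ ≤ a + b := by
          refine add_le_add ?_ le_rfl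
          rw [hsymm]; exact hd10
  have hA0le' : (A0 : ℝ) ≤ (a : ℝ) + (a : ℝ) := by exact_mod_cast hA0le
  have hb0le' : (b0 : ℝ) ≤ (a : ℝ) + (b : ℝ) := by exact_mod_cast hb0le
  have haa : (0:ℝ) ≤ (a:ℝ) := a.coe_nonneg
  have hbb : (0:ℝ) ≤ (b:ℝ) := b.coe_nonneg
  have hA0nn : (0:ℝ) ≤ (A0:ℝ) := A0.coe_nonneg
  have hb0nn : (0:ℝ) ≤ (b0:ℝ) := b0.coe_nonneg
  rw [wLoss, wLoss]
  rw [div_mul_eq_mul_div, le_div_iff₀ hlam0]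
  nlinarith [mul_nonneg (mul_nonneg hlam0.le (sub_nonneg.2 hlam1)) haa,
    mul_nonneg (mul_nonneg hlam0.le (sub_nonneg.2 hlam1)) hbb,
    mul_nonneg (sub_nonneg.2 hlam1) hbb,
    mul_nonneg (sub_nonneg.2 hlam1) haa,
    mul_le_mul_of_nonneg_left hA0le' hlam0.le,
    mul_le_mul_of_nonneg_left hb0le' (sub_nonneg.2 hlam1)]

end CoreAux

/-- For every semi-centroid clustering instance with the weighted single metric loss with
parameter `λ ∈ (0,1]`, there exists a clustering in the `(2/λ)`-core. -/
theorem exists_core_weighted {N M : Type*} [Fintype N] [Nonempty N]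
    [Fintype M] [Nonempty M] {k : ℕ} (hk : 1 ≤ k)
    (d : N ⊕ M → N ⊕ M → NNReal) (hd : IsPseudometric d)
    (lam : ℝ) (hlam0 : 0 < lam) (hlam1 : lam ≤ 1) :
    ∃ X : Clustering N M k, InCore X (wLoss d lam) (2 / lam) := by
  classical
  set n := Fintype.card N with hn
  have hn1 : 1 ≤ n := Fintype.card_pos
  obtain ⟨x0⟩ := ‹Nonempty M›
  -- the greedy step: a minimal-quality candidate cluster
  have step : ∀ R : Finset N, n ≤ R.card * k →
      ∃ p : Finset N × M, p.1 ⊆ R ∧ n ≤ p.1.card * k ∧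
        ∀ S : Finset N, S ⊆ R → n ≤ S.card * k → ∀ y : M,
          CoreAux.qmax d lam p.1 p.2 ≤ CoreAux.qmax d lam S y := by
    intro R hR
    have hne : ((R.powerset.filter fun C => n ≤ C.card * k) ×ˢ (Finset.univ : Finset M)).Nonempty :=
      ⟨(R, x0), by simp [Finset.mem_product, Finset.mem_filter, hR]⟩
    obtain ⟨p, hp, hmin⟩ :=
      Finset.exists_min_image _ (fun p => CoreAux.qmax d lam p.1 p.2) hne
    simp only [Finset.mem_product, Finset.mem_filter, Finset.mem_powerset] at hp
    exact ⟨p, hp.1.1, hp.1.2, fun S hS hcard y =>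
      hmin (S, y) (by simp [Finset.mem_product, Finset.mem_filter, Finset.mem_powerset, hS, hcard])⟩
  -- main greedy-capture induction
  have main : ∀ m (R : Finset N), R.card ≤ m →
      ∃ L : List (Finset N × M),
        (∀ p ∈ L, p.1 ⊆ R ∧ p.1.Nonempty) ∧
        L.Pairwise (fun p q => Disjoint p.1 q.1) ∧
        (∀ T : Finset N, T ⊆ R → (∀ p ∈ L, Disjoint T p.1) →
          n * L.length + k * T.card ≤ k * R.card ∧ k * T.card < n) ∧
        (∀ (L1 : List (Finset N × M)) p L2, L = L1 ++ p :: L2 →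
          ∀ (S : Finset N) (y : M), S ⊆ R → n ≤ S.card * k →
            (∀ r ∈ L1, Disjoint S r.1) →
            CoreAux.qmax d lam p.1 p.2 ≤ CoreAux.qmax d lam S y) := by
    have emptyCase : ∀ R : Finset N, ¬ n ≤ R.card * k →
        ∃ L : List (Finset N × M),
        (∀ p ∈ L, p.1 ⊆ R ∧ p.1.Nonempty) ∧
        L.Pairwise (fun p q => Disjoint p.1 q.1) ∧
        (∀ T : Finset N, T ⊆ R → (∀ p ∈ L, Disjoint T p.1) →
          n * L.length + k * T.card ≤ k * R.card ∧ k * T.card < n) ∧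
        (∀ (L1 : List (Finset N × M)) p L2, L = L1 ++ p :: L2 →
          ∀ (S : Finset N) (y : M), S ⊆ R → n ≤ S.card * k →
            (∀ r ∈ L1, Disjoint S r.1) →
            CoreAux.qmax d lam p.1 p.2 ≤ CoreAux.qmax d lam S y) := by
      intro R hR
      refine ⟨[], by simp, List.Pairwise.nil, ?_, by simp⟩
      intro T hT _
      have h1 : T.card ≤ R.card := Finset.card_le_card hT
      have h2 : R.card * k < n := not_le.1 hR
      constructor
      · simpa using Nat.mul_le_mul_left k h1
      · calc k * T.card ≤ k * R.card := Nat.mul_le_mul_left k h1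
          _ = R.card * k := Nat.mul_comm _ _
          _ < n := h2
    intro m
    induction m with
    | zero =>
      intro R hR
      have : R.card = 0 := Nat.le_zero.1 hR
      exact emptyCase R (by rw [this]; simp; omega)
    | succ m ih =>
      intro R hR
      by_cases h : n ≤ R.card * k
      · obtain ⟨p, hpR, hpcard, hpmin⟩ := step R h
        have hpne : p.1.Nonempty := by
          rw [← Finset.card_pos]
          rcases Nat.eq_zero_or_pos p.1.card with h0 | hppos
          · rw [h0] at hpcard; simp at hpcard; omega
          · exact hppos
        have hssub : R \ p.1 ⊂ R := Finset.sdiff_ssubset hpR hpne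
        have hlt : (R \ p.1).card < R.card := Finset.card_lt_card hssub
        obtain ⟨L', hA, hB, hC, hD⟩ := ih (R \ p.1) (by omega)
        have hcardsum : (R \ p.1).card + p.1.card = R.card :=
          Finset.card_sdiff_add_card_eq_card hpR
        refine ⟨p :: L', ?_, ?_, ?_, ?_⟩
        · rintro q hq
          rcases List.mem_cons.1 hq with rfl | hq'
          · exact ⟨hpR, hpne⟩
          · exact ⟨((hA q hq').1).trans (Finset.sdiff_subset), (hA q hq').2⟩
        · refine List.Pairwise.cons (fun q hq => ?_) hB
          exact (Finset.disjoint_of_subset_left (hA q hq).1 Finset.sdiff_disjoint).symm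
        · intro T hT hdisj
          have hT' : T ⊆ R \ p.1 :=
            Finset.subset_sdiff.2 ⟨hT, hdisj p List.mem_cons_self⟩
          obtain ⟨h1, h2⟩ := hC T hT' (fun q hq => hdisj q (List.mem_cons_of_mem _ hq))
          refine ⟨?_, h2⟩
          have : n * (p :: L').length + k * T.card
              = (n * L'.length + k * T.card) + n := by
            simp [List.length_cons]; ring
          rw [this]
          calc (n * L'.length + k * T.card) + n
              ≤ k * (R \ p.1).card + p.1.card * k := add_le_add h1 hpcard
            _ = k * ((R \ p.1).card + p.1.card) := by ring
            _ = k * R.card := by rw [hcardsum]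
        · rintro L1 q L2 heq S y hS hScard hdisj
          cases L1 with
          | nil =>
            simp only [List.nil_append, List.cons.injEq] at heq
            rw [← heq.1]
            exact hpmin S hS hScard y
          | cons a L1' =>
            simp only [List.cons_append, List.cons.injEq] at heq
            obtain ⟨rfl, heq2⟩ := heq
            have hSp : Disjoint S p.1 := hdisj p List.mem_cons_self
            have hS' : S ⊆ R \ p.1 := Finset.subset_sdiff.2 ⟨hS, hSp⟩
            exact hD L1' q L2 heq2 S y hS' hScard
              (fun r hr => hdisj r (List.mem_cons_of_mem _ hr))
      · exact emptyCase R h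
  obtain ⟨L, hA, hB, hC, hD⟩ := main (Finset.univ : Finset N).card Finset.univ le_rfl
  have hcardU : (Finset.univ : Finset N).card = n := rfl
  set lo : Finset N := Finset.univ \ CoreAux.unionF L with hlo
  have hlodisj : ∀ p ∈ L, Disjoint lo p.1 := by
    intro p hp
    rw [Finset.disjoint_left]
    intro i hi hip
    rw [hlo, Finset.mem_sdiff] at hi
    exact hi.2 (CoreAux.mem_unionF.2 ⟨p, hp, hip⟩)
  obtain ⟨hlen, hlocard⟩ := hC lo (Finset.subset_univ _) hlodisj
  rw [hcardU] at hlen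
  have hlenk : L.length ≤ k := by
    have : n * L.length ≤ n * k := by
      calc n * L.length ≤ n * L.length + k * lo.card := Nat.le_add_right _ _
        _ ≤ k * n := hlen
        _ = n * k := Nat.mul_comm _ _
    exact Nat.le_of_mul_le_mul_left this (by omega)
  have hlenlt : lo.Nonempty → L.length < k := by
    intro hne
    have h1 : 1 ≤ lo.card := Finset.card_pos.2 hne
    have : n * L.length < n * k := by
      have hkk : k ≤ k * lo.card := Nat.le_mul_of_pos_right k (by omega)
      have : n * L.length + k ≤ k * n := le_trans (by omega) hlen
      have hkpos : 0 < k := by omega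
      calc n * L.length < n * L.length + k := by omega
        _ ≤ k * n := this
        _ = n * k := Nat.mul_comm _ _
    exact Nat.lt_of_mul_lt_mul_left this
  -- build the clustering
  set f : Fin k → Finset N := fun t =>
    if h : (t : ℕ) < L.length then (L[(t : ℕ)]'h).1
    else if (t : ℕ) = L.length then lo else ∅ with hf
  set g : Fin k → M := fun t =>
    if h : (t : ℕ) < L.length then (L[(t : ℕ)]'h).2 else x0 with hg
  have hpair := List.pairwise_iff_getElem.1 hB
  have hfval1 : ∀ (a : ℕ) (h : a < L.length) (hk' : a < k),
      f ⟨a, hk'⟩ = (L[a]'h).1 := by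
    intro a h hk'
    rw [hf]
    exact dif_pos h
  have hgval1 : ∀ (a : ℕ) (h : a < L.length) (hk' : a < k),
      g ⟨a, hk'⟩ = (L[a]'h).2 := by
    intro a h hk'
    rw [hg]
    exact dif_pos h
  have hfval2 : ∀ (hk' : L.length < k), f ⟨L.length, hk'⟩ = lo := by
    intro hk'
    rw [hf]
    exact (dif_neg (lt_irrefl _)).trans (if_pos rfl)
  have hfval3 : ∀ (a : ℕ) (hk' : a < k), ¬ a < L.length → a ≠ L.length →
      f ⟨a, hk'⟩ = ∅ := by
    intro a hk' h1 h2
    rw [hf]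
    exact (dif_neg h1).trans (if_neg h2)
  have hpart : ∀ i : N, ∃! t : Fin k, i ∈ f t := by
    intro i
    by_cases hiU : i ∈ CoreAux.unionF L
    · obtain ⟨p, hpL, hip⟩ := CoreAux.mem_unionF.1 hiU
      obtain ⟨t, ht, hpt⟩ := List.mem_iff_getElem.1 hpL
      refine ⟨⟨t, lt_of_lt_of_le ht hlenk⟩, ?_, ?_⟩
      · show i ∈ f ⟨t, lt_of_lt_of_le ht hlenk⟩
        rw [hfval1 t ht (lt_of_lt_of_le ht hlenk), hpt]; exact hip
      · rintro ⟨u, hu⟩ hmem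
        change i ∈ f ⟨u, hu⟩ at hmem
        by_cases hu1 : u < L.length
        · rw [hfval1 u hu1 hu] at hmem
          have : u = t := by
            by_contra hne
            rcases Nat.lt_or_ge u t with hlt | hge
            · have hdis := hpair u t hu1 ht hlt
              rw [hpt] at hdis
              exact Finset.disjoint_left.1 hdis hmem hip
            · have htu : t < u := by omega
              have hdis := hpair t u ht hu1 htu
              rw [hpt] at hdis
              exact Finset.disjoint_left.1 hdis hip hmem
          exact Fin.ext this
        · by_cases hu2 : u = L.length
          · subst hu2
            rw [hfval2 hu] at hmem
            rw [hlo, Finset.mem_sdiff] at hmem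
            exact absurd hiU hmem.2
          · rw [hfval3 u hu hu1 hu2] at hmem
            exact absurd hmem (Finset.notMem_empty i)
    · have hilo : i ∈ lo := by rw [hlo, Finset.mem_sdiff]; exact ⟨Finset.mem_univ i, hiU⟩
      have hltk : L.length < k := hlenlt ⟨i, hilo⟩
      refine ⟨⟨L.length, hltk⟩, ?_, ?_⟩
      · show i ∈ f ⟨L.length, hltk⟩
        rw [hfval2 hltk]; exact hilo
      · rintro ⟨u, hu⟩ hmem
        change i ∈ f ⟨u, hu⟩ at hmem
        by_cases hu1 : u < L.length
        · rw [hfval1 u hu1 hu] at hmem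
          exact absurd (CoreAux.mem_unionF.2 ⟨L[u], List.getElem_mem _, hmem⟩) hiU
        · by_cases hu2 : u = L.length
          · exact Fin.ext hu2
          · rw [hfval3 u hu hu1 hu2] at hmem
            exact absurd hmem (Finset.notMem_empty i)
  refine ⟨⟨f, g, hpart⟩, ?_⟩
  rintro ⟨S, y, hSsize, hblock⟩
  set X : Clustering N M k := ⟨f, g, hpart⟩ with hX
  have hkpos : (0 : ℝ) < (k : ℝ) := by exact_mod_cast (by omega : 0 < k)
  have hScard : n ≤ S.card * k := by
    have h1 : (n : ℝ) ≤ (S.card : ℝ) * (k : ℝ) := by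
      rw [div_le_iff₀ hkpos] at hSsize
      exact_mod_cast hSsize
    exact_mod_cast h1
  have hSne : S.Nonempty := by
    rw [← Finset.card_pos]
    rcases Nat.eq_zero_or_pos S.card with h0 | hpos
    · rw [h0] at hScard; simp at hScard; omega
    · exact hpos
  have hmeet : ∃ p ∈ L, ¬ Disjoint S p.1 := by
    by_contra hno
    push_neg at hno
    have h2 := (hC S (Finset.subset_univ _) (fun p hp => hno p hp)).2
    rw [Nat.mul_comm] at h2
    omega
  obtain ⟨L1, p, L2, hLeq, hPp, hnot⟩ := CoreAux.exists_first hmeet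
  have hqle : CoreAux.qmax d lam p.1 p.2 ≤ CoreAux.qmax d lam S y :=
    hD L1 p L2 hLeq S y (Finset.subset_univ _) hScard
      (fun r hr => not_not.1 (hnot r hr))
  obtain ⟨istar, hiS, hip⟩ := Finset.not_disjoint_iff.1 hPp
  have ht : L1.length < L.length := by
    rw [hLeq, List.length_append, List.length_cons]; omega
  have hgetp : L[L1.length]'ht = p := by
    have h5 : (L1 ++ p :: L2)[L1.length]'(by rw [← hLeq]; exact ht) = p := by
      rw [List.getElem_append_right (le_refl L1.length)]
      simp
    simpa [hLeq] using h5
  have htk : L1.length < k := lt_of_lt_of_le ht hlenk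
  have hmemf : istar ∈ f ⟨L1.length, htk⟩ := by
    rw [hfval1 _ ht htk, hgetp]; exact hip
  have hidx : X.idx istar = ⟨L1.length, htk⟩ := by
    obtain ⟨u, hu, huniq⟩ := X.partition istar
    have h1 : X.idx istar = u := huniq _ (X.partition istar).exists.choose_spec
    have h2 : (⟨L1.length, htk⟩ : Fin k) = u := huniq _ hmemf
    rw [h1, ← h2]
  have hloss : X.loss (wLoss d lam) istar = wLoss d lam istar p.1 p.2 := by
    rw [Clustering.loss, hidx]
    show wLoss d lam istar (f ⟨L1.length, htk⟩) (g ⟨L1.length, htk⟩) = _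
    rw [hfval1 _ ht htk, hgval1 _ ht htk, hgetp]
  have hq2 : CoreAux.qmax d lam S y ≤ 2 / lam * wLoss d lam istar S y :=
    CoreAux.qmax_le hSne (fun i0 hi0 => CoreAux.key hd hlam0 hlam1 hi0 hiS)
  have hfin := hblock istar hiS
  rw [hloss] at hfin
  have hlt2 : 2 / lam * wLoss d lam istar S y < 2 / lam * wLoss d lam istar S y :=
    lt_of_lt_of_le hfin (le_trans (CoreAux.wLoss_le_qmax hip) (le_trans hqle hq2))
  exact lt_irrefl _ hlt2
end

section
/- For every semi-centroid clustering instance equipped with the weighted single metric loss with parameter λ ∈ [0,1), there exists a clustering that is in the α-core for α = (√(2λ − 11λ² + 13) + 3 − λ)/(2 − 2λ). -/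
open Finset

open scoped Classical

noncomputable section

namespace SemiBallCore

variable {N M : Type*} [Fintype N] [Fintype M] [Nonempty M]

/-- agent-agent distance, as a real number -/
def dA (d : N ⊕ M → N ⊕ M → NNReal) (i j : N) : ℝ := (d (Sum.inl i) (Sum.inl j) : ℝ)

/-- agent-center distance, as a real number -/
def dC (d : N ⊕ M → N ⊕ M → NNReal) (i : N) (x : M) : ℝ := (d (Sum.inl i) (Sum.inr x) : ℝ)

variable (d : N ⊕ M → N ⊕ M → NNReal) (s : ℕ)

lemma dA_nonneg (i j : N) : 0 ≤ dA d i j := NNReal.coe_nonneg _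
lemma dC_nonneg (i : N) (x : M) : 0 ≤ dC d i x := NNReal.coe_nonneg _

lemma dA_self (hd : IsPseudometric d) (i : N) : dA d i i = 0 := by
  unfold dA; rw [hd.1]; simp

lemma dA_symm (hd : IsPseudometric d) (i j : N) : dA d i j = dA d j i := by
  unfold dA; rw [hd.2.1]

lemma tri_ACA (hd : IsPseudometric d) (i j : N) (x : M) :
    dA d i j ≤ dC d i x + dC d j x := by
  have h := hd.2.2 (Sum.inl i) (Sum.inl j) (Sum.inr x)
  rw [hd.2.1 (Sum.inr x) (Sum.inl j)] at h
  exact_mod_cast h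

lemma tri_CAC (hd : IsPseudometric d) (i j : N) (x : M) :
    dC d i x ≤ dA d i j + dC d j x := by
  have h := hd.2.2 (Sum.inl i) (Sum.inr x) (Sum.inl j)
  exact_mod_cast h

/-- ball of radius `r` around center `x`, within `R` -/
def ball (R : Finset N) (x : M) (r : ℝ) : Finset N := R.filter (fun z => dC d z x ≤ r)

lemma ball_subset (R : Finset N) (x : M) (r : ℝ) : ball d R x r ⊆ R := filter_subset _ _

lemma ball_dist {R : Finset N} {x : M} {r : ℝ} {z : N} (hz : z ∈ ball d R x r) :
    dC d z x ≤ r := (mem_filter.1 hz).2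

/-- candidate radii: all distances from members of R to centers -/
def rads (R : Finset N) : Finset ℝ := (R ×ˢ (univ : Finset M)).image (fun p => dC d p.1 p.2)

/-- candidate (center, radius) pairs whose ball holds at least `s` members of `R` -/
def cand (R : Finset N) : Finset (M × ℝ) :=
  ((univ : Finset M) ×ˢ rads d R).filter (fun p => s ≤ (ball d R p.1 p.2).card)

lemma cand_nonempty {R : Finset N} (h1 : 1 ≤ s) (hsR : s ≤ R.card) :
    (cand d s R).Nonempty := by
  have hR : R.Nonempty := card_pos.1 (lt_of_lt_of_le h1 hsR)
  obtain ⟨z0, hz0⟩ := hR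
  have x0 : M := Classical.arbitrary M
  have himg : (R.image (fun z => dC d z x0)).Nonempty := ⟨dC d z0 x0, mem_image_of_mem _ hz0⟩
  set r0 := (R.image (fun z => dC d z x0)).max' himg with hr0
  have hr0mem : r0 ∈ R.image (fun z => dC d z x0) := Finset.max'_mem _ _
  obtain ⟨z1, hz1R, hz1⟩ := Finset.mem_image.1 hr0mem
  refine ⟨(x0, r0), ?_⟩
  unfold cand
  rw [mem_filter, mem_product]
  refine ⟨⟨mem_univ _, ?_⟩, ?_⟩
  · unfold rads
    exact mem_image.2 ⟨(z1, x0), mem_product.2 ⟨hz1R, mem_univ _⟩, hz1⟩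
  · have hball : ball d R x0 r0 = R := by
      unfold ball
      apply filter_true_of_mem
      intro z hz
      exact Finset.le_max' (R.image (fun z => dC d z x0)) (dC d z x0)
        (mem_image_of_mem _ hz)
    rw [hball]; exact hsR

/-- greedy choice: a candidate pair of minimal radius -/
def pick (R : Finset N) : M × ℝ :=
  if h : (cand d s R).Nonempty then
    (Finset.exists_min_image (cand d s R) Prod.snd h).choose
  else (Classical.arbitrary M, 0)

lemma pick_spec {R : Finset N} (h1 : 1 ≤ s) (hsR : s ≤ R.card) :
    pick d s R ∈ cand d s R ∧ ∀ p ∈ cand d s R, (pick d s R).2 ≤ p.2 := by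
  have hne : (cand d s R).Nonempty := cand_nonempty d s h1 hsR
  unfold pick
  rw [dif_pos hne]
  obtain ⟨hm, hmin⟩ := (Finset.exists_min_image (cand d s R) Prod.snd hne).choose_spec
  exact ⟨hm, hmin⟩

lemma pick_rad_nonneg {R : Finset N} (h1 : 1 ≤ s) (hsR : s ≤ R.card) :
    0 ≤ (pick d s R).2 := by
  have h := (pick_spec d s h1 hsR).1
  unfold cand at h
  rw [mem_filter, mem_product] at h
  obtain ⟨⟨_, hr⟩, _⟩ := h
  unfold rads at hr
  obtain ⟨p, _, hp⟩ := mem_image.1 hr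
  rw [← hp]
  exact dC_nonneg d _ _

lemma pick_card {R : Finset N} (h1 : 1 ≤ s) (hsR : s ≤ R.card) :
    s ≤ (ball d R (pick d s R).1 (pick d s R).2).card := by
  have h := (pick_spec d s h1 hsR).1
  unfold cand at h
  rw [mem_filter] at h
  exact h.2

/-- Phase 1: greedy ball capture, with fuel for termination. -/
def phase1 : ℕ → Finset N → List (M × ℝ × Finset N)
  | 0, _ => []
  | (fuel+1), R =>
    if h : 1 ≤ s ∧ s ≤ R.card then
      ((pick d s R).1, (pick d s R).2, ball d R (pick d s R).1 (pick d s R).2) ::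
        phase1 fuel (R \ ball d R (pick d s R).1 (pick d s R).2)
    else []

/-- leftover agents after phase 1 -/
def leftover : ℕ → Finset N → Finset N
  | 0, R => R
  | (fuel+1), R =>
    if h : 1 ≤ s ∧ s ≤ R.card then
      leftover fuel (R \ ball d R (pick d s R).1 (pick d s R).2)
    else R

lemma ph_balls : ∀ (fuel : ℕ) (R : Finset N) {x : M} {r : ℝ} {B : Finset N},
    (x, r, B) ∈ phase1 d s fuel R →
    B ⊆ R ∧ 0 ≤ r ∧ s ≤ B.card ∧ ∀ z ∈ B, dC d z x ≤ r := by
  intro fuel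
  induction fuel with
  | zero => intro R x r B h; simp [phase1] at h
  | succ fuel ih =>
    intro R x r B h
    rw [phase1] at h
    by_cases hc : 1 ≤ s ∧ s ≤ R.card
    · rw [dif_pos hc] at h
      rcases List.mem_cons.1 h with h | h
      · have hx : x = (pick d s R).1 := congrArg Prod.fst h
        have hr : r = (pick d s R).2 := congrArg (fun p => p.2.1) h
        have hB : B = ball d R (pick d s R).1 (pick d s R).2 := congrArg (fun p => p.2.2) h
        subst hx; subst hr
        rw [hB]
        exact ⟨ball_subset d _ _ _, pick_rad_nonneg d s hc.1 hc.2, pick_card d s hc.1 hc.2,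
          fun z hz => ball_dist d hz⟩
      · obtain ⟨hBR, hr, hcard, hdist⟩ := ih _ h
        exact ⟨hBR.trans (sdiff_subset), hr, hcard, hdist⟩
    · rw [dif_neg hc] at h; simp at h

lemma ph_count : ∀ (fuel : ℕ) (R : Finset N),
    s * (phase1 d s fuel R).length + (leftover d s fuel R).card ≤ R.card := by
  intro fuel
  induction fuel with
  | zero => intro R; simp [phase1, leftover]
  | succ fuel ih =>
    intro R
    rw [phase1, leftover]
    by_cases hc : 1 ≤ s ∧ s ≤ R.card
    · rw [dif_pos hc, dif_pos hc]
      set B := ball d R (pick d s R).1 (pick d s R).2 with hB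
      have hsub : B ⊆ R := ball_subset d _ _ _
      have hcard : s ≤ B.card := pick_card d s hc.1 hc.2
      have hsd : (R \ B).card = R.card - B.card := card_sdiff_of_subset hsub
      have hBle : B.card ≤ R.card := card_le_card hsub
      have := ih (R \ B)
      simp only [List.length_cons]
      have hms : s * ((phase1 d s fuel (R \ B)).length + 1)
          = s * (phase1 d s fuel (R \ B)).length + s := Nat.mul_succ _ _
      omega
    · rw [dif_neg hc, dif_neg hc]; simp

lemma ph_left_mem : ∀ (fuel : ℕ) (R : Finset N) (z : N), z ∈ R → z ∉ leftover d s fuel R →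
    ∃ x r B, (x, r, B) ∈ phase1 d s fuel R ∧ z ∈ B := by
  intro fuel
  induction fuel with
  | zero => intro R z hz hnz; exact absurd hz hnz
  | succ fuel ih =>
    intro R z hz hnz
    rw [leftover] at hnz
    rw [phase1]
    by_cases hc : 1 ≤ s ∧ s ≤ R.card
    · rw [dif_pos hc] at hnz
      rw [dif_pos hc]
      set B := ball d R (pick d s R).1 (pick d s R).2 with hB
      by_cases hzB : z ∈ B
      · exact ⟨_, _, _, List.mem_cons_self, hzB⟩
      · obtain ⟨x, r, B', hmem, hzB'⟩ := ih (R \ B) z (mem_sdiff.2 ⟨hz, hzB⟩) hnz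
        exact ⟨x, r, B', List.mem_cons_of_mem _ hmem, hzB'⟩
    · rw [dif_neg hc] at hnz
      exact absurd hz hnz

lemma ph_first_touch (hd : IsPseudometric d) :
    ∀ (fuel : ℕ) (R T : Finset N) (y : M) (w : N),
      1 ≤ s → s ≤ T.card → T ⊆ R → w ∈ T → (∀ i ∈ T, dC d i y ≤ dC d w y) →
      R.card ≤ fuel →
      ∃ x r B, (x, r, B) ∈ phase1 d s fuel R ∧ r ≤ dC d w y ∧ ∃ i, i ∈ B ∧ i ∈ T := by
  intro fuel
  induction fuel with
  | zero =>
    intro R T y w h1 hT hTR hw _ hfuel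
    have : T.card ≤ R.card := card_le_card hTR
    omega
  | succ fuel ih =>
    intro R T y w h1 hT hTR hw hcov hfuel
    have hsR : s ≤ R.card := le_trans hT (card_le_card hTR)
    rw [phase1, dif_pos ⟨h1, hsR⟩]
    set B := ball d R (pick d s R).1 (pick d s R).2 with hB
    by_cases hmeet : ∃ i, i ∈ B ∧ i ∈ T
    · refine ⟨(pick d s R).1, (pick d s R).2, B, List.mem_cons_self, ?_, hmeet⟩
      -- minimality of the picked radius against the candidate (y, dC w y)
      have hcand : ((y : M), dC d w y) ∈ cand d s R := by
        unfold cand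
        rw [mem_filter, mem_product]
        refine ⟨⟨mem_univ _, ?_⟩, ?_⟩
        · unfold rads
          exact mem_image.2 ⟨(w, y), mem_product.2 ⟨hTR hw, mem_univ _⟩, rfl⟩
        · refine le_trans hT (card_le_card ?_)
          intro i hi
          unfold ball
          exact mem_filter.2 ⟨hTR hi, hcov i hi⟩
      exact (pick_spec d s h1 hsR).2 _ hcand
    · push_neg at hmeet
      have hT' : T ⊆ R \ B := by
        intro i hi
        exact mem_sdiff.2 ⟨hTR hi, fun hb => hmeet i hb hi⟩
      have hcardB : s ≤ B.card := pick_card d s h1 hsR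
      have hsub : B ⊆ R := ball_subset d _ _ _
      have hfuel' : (R \ B).card ≤ fuel := by
        have h1' := card_sdiff_of_subset hsub
        have h2' := card_le_card hsub
        omega
      obtain ⟨x, r, B', hmem, hr, hi⟩ := ih (R \ B) T y w h1 hT hT' hw hcov hfuel'
      exact ⟨x, r, B', List.mem_cons_of_mem _ hmem, hr, hi⟩

section GlobalDefs

variable (lam κ : ℝ)

/-- the list of phase-1 rounds on the full agent set -/
def rounds : List (M × ℝ × Finset N) := phase1 d s (Fintype.card N) univ

/-- number of phase-1 clusters -/
def m : ℕ := (rounds d s).length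

def nth (t : ℕ) : M × ℝ × Finset N :=
  if h : t < (rounds d s).length then (rounds d s).get ⟨t, h⟩
  else (Classical.arbitrary M, 0, (∅ : Finset N))

def cenT (t : ℕ) : M := (nth d s t).1
def radT (t : ℕ) : ℝ := (nth d s t).2.1

/-- eligible clusters for agent `z` -/
def elig (z : N) : Finset ℕ :=
  (Finset.range (m d s)).filter (fun t => lam * dC d z (cenT d s t) ≤ κ * radT d s t)

/-- the value of assigning `z` to cluster `t` -/
def vval (z : N) (t : ℕ) : ℝ := dC d z (cenT d s t) + κ * radT d s t

/-- final assignment of `z`: an eligible cluster of minimal value, or `m` (junk) -/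
def sig (z : N) : ℕ :=
  if h : (elig d s lam κ z).Nonempty then
    (Finset.exists_min_image (elig d s lam κ z) (vval d s κ z) h).choose
  else m d s

lemma sig_spec {z : N} (h : (elig d s lam κ z).Nonempty) :
    sig d s lam κ z ∈ elig d s lam κ z ∧
      ∀ t ∈ elig d s lam κ z, vval d s κ z (sig d s lam κ z) ≤ vval d s κ z t := by
  rw [sig, dif_pos h]
  obtain ⟨hm, hmin⟩ :=
    (Finset.exists_min_image (elig d s lam κ z) (vval d s κ z) h).choose_spec
  exact ⟨hm, hmin⟩

lemma sig_junk {z : N} (h : ¬ (elig d s lam κ z).Nonempty) : sig d s lam κ z = m d s := by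
  rw [sig, dif_neg h]

lemma mem_rounds_index {x : M} {r : ℝ} {B : Finset N} (h : (x, r, B) ∈ rounds d s) :
    ∃ t, t < m d s ∧ cenT d s t = x ∧ radT d s t = r := by
  obtain ⟨⟨t, ht⟩, hget⟩ := List.mem_iff_get.1 h
  refine ⟨t, ht, ?_, ?_⟩
  · rw [cenT, nth, dif_pos ht, hget]
  · rw [radT, nth, dif_pos ht, hget]

lemma sig_lt {k : ℕ} (h0 : 0 ≤ lam) (hκl : lam ≤ κ) (hs1 : 1 ≤ s)
    (hnk : Fintype.card N ≤ k * s) (z : N) : sig d s lam κ z < k := by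
  have hcount : s * (m d s) + (leftover d s (Fintype.card N) univ).card ≤ Fintype.card N := by
    have h := ph_count d s (Fintype.card N) (univ : Finset N)
    rwa [card_univ] at h
  by_cases hE : (elig d s lam κ z).Nonempty
  · have h1 := (sig_spec d s lam κ hE).1
    have h2 : sig d s lam κ z < m d s := mem_range.1 (mem_filter.1 h1).1
    have h3 : s * m d s ≤ s * k := by
      calc s * m d s ≤ Fintype.card N := by omega
        _ ≤ k * s := hnk
        _ = s * k := Nat.mul_comm _ _
    have h4 : m d s ≤ k := Nat.le_of_mul_le_mul_left h3 (by omega)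
    omega
  · rw [sig_junk d s lam κ hE]
    have hzL : z ∈ leftover d s (Fintype.card N) univ := by
      by_contra hc
      obtain ⟨x, r, B, hmem, hzB⟩ := ph_left_mem d s _ univ z (mem_univ z) hc
      obtain ⟨hBsub, hrnn, hBc, hball⟩ := ph_balls d s _ univ hmem
      obtain ⟨t, htm, hcx, hrx⟩ := mem_rounds_index d s hmem
      apply hE
      refine ⟨t, ?_⟩
      rw [elig, mem_filter, mem_range]
      refine ⟨htm, ?_⟩
      rw [hcx, hrx]
      calc lam * dC d z x ≤ lam * r := mul_le_mul_of_nonneg_left (hball z hzB) h0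
        _ ≤ κ * r := mul_le_mul_of_nonneg_right hκl hrnn
    have hpos : 0 < (leftover d s (Fintype.card N) univ).card := card_pos.2 ⟨z, hzL⟩
    have h3 : s * m d s + 1 ≤ s * k := by
      calc s * m d s + 1 ≤ Fintype.card N := by omega
        _ ≤ k * s := hnk
        _ = s * k := Nat.mul_comm _ _
    have h4 : m d s < k := by
      have h5 : s * m d s < s * k := by omega
      exact Nat.lt_of_mul_lt_mul_left h5
    omega

variable (k : ℕ)

/-- the clustering produced by the algorithm -/
def buildX (hks : ∀ z : N, sig d s lam κ z < k) : Clustering N M k where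
  part t := univ.filter (fun z => sig d s lam κ z = (t : ℕ))
  cent t := if (t : ℕ) < m d s then cenT d s (t : ℕ) else Classical.arbitrary M
  partition i := by
    refine ⟨⟨sig d s lam κ i, hks i⟩, by simp, ?_⟩
    intro t' ht'
    rw [mem_filter] at ht'
    exact Fin.ext ht'.2.symm

lemma buildX_part (hks : ∀ z : N, sig d s lam κ z < k) (t : Fin k) :
    (buildX d s lam κ k hks).part t = univ.filter (fun z => sig d s lam κ z = (t : ℕ)) := rfl

lemma buildX_cent (hks : ∀ z : N, sig d s lam κ z < k) (t : Fin k) :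
    (buildX d s lam κ k hks).cent t =
      if (t : ℕ) < m d s then cenT d s (t : ℕ) else Classical.arbitrary M := rfl

lemma loss_le (hd : IsPseudometric d) (h0 : 0 ≤ lam)
    (hks : ∀ z : N, sig d s lam κ z < k) (z : N) (t' : ℕ) (ht' : t' ∈ elig d s lam κ z) :
    (buildX d s lam κ k hks).loss (wLoss d lam) z ≤ vval d s κ z t' := by
  set X := buildX d s lam κ k hks with hX
  have hidx : z ∈ X.part (X.idx z) := (X.partition z).exists.choose_spec
  rw [hX, buildX_part] at hidx
  have hsg : sig d s lam κ z = ((X.idx z) : ℕ) := (mem_filter.1 hidx).2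
  have hEz : (elig d s lam κ z).Nonempty := ⟨t', ht'⟩
  obtain ⟨hmemE, hmin⟩ := sig_spec d s lam κ hEz
  have htm : sig d s lam κ z < m d s := mem_range.1 (mem_filter.1 hmemE).1
  have hpart : X.part (X.idx z) = univ.filter (fun z' => sig d s lam κ z' = sig d s lam κ z) := by
    rw [hX, buildX_part, ← hsg]
  have hcent : X.cent (X.idx z) = cenT d s (sig d s lam κ z) := by
    rw [hX, buildX_cent, ← hsg, if_pos htm]
  have hloss : X.loss (wLoss d lam) z
      = wLoss d lam z (univ.filter (fun z' => sig d s lam κ z' = sig d s lam κ z))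
          (cenT d s (sig d s lam κ z)) := by
    rw [Clustering.loss, hpart, hcent]
  rw [hloss]
  set c := cenT d s (sig d s lam κ z) with hc
  set C := univ.filter (fun z' => sig d s lam κ z' = sig d s lam κ z) with hC
  have hzC : z ∈ C := by rw [hC]; simp
  obtain ⟨jb, hjC, hsup⟩ :=
    Finset.exists_mem_eq_sup C ⟨z, hzC⟩ (fun j => d (Sum.inl z) (Sum.inl j))
  have hjt : sig d s lam κ jb = sig d s lam κ z := by
    rw [hC] at hjC; exact (mem_filter.1 hjC).2
  have hEj : (elig d s lam κ jb).Nonempty := by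
    by_contra he
    have hj := sig_junk d s lam κ he
    omega
  have hjel : sig d s lam κ z ∈ elig d s lam κ jb := by
    rw [← hjt]; exact (sig_spec d s lam κ hEj).1
  have hjcap : lam * dC d jb c ≤ κ * radT d s (sig d s lam κ z) :=
    (mem_filter.1 hjel).2
  have htri : dA d z jb ≤ dC d z c + dC d jb c := tri_ACA d hd z jb c
  have hkey : wLoss d lam z C c ≤ vval d s κ z (sig d s lam κ z) := by
    unfold wLoss vval
    rw [hsup]
    have h2 : lam * dA d z jb ≤ lam * (dC d z c + dC d jb c) :=
      mul_le_mul_of_nonneg_left htri h0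
    have e1 : ((d (Sum.inl z) (Sum.inl jb) : NNReal) : ℝ) = dA d z jb := rfl
    have e2 : ((d (Sum.inl z) (Sum.inr c) : NNReal) : ℝ) = dC d z c := rfl
    rw [e1, e2, ← hc]
    nlinarith [hjcap, h2]
  exact le_trans hkey (hmin t' ht')

end GlobalDefs

lemma wLoss_lb (lam : ℝ) (h0 : 0 ≤ lam) (h1 : lam ≤ 1) (i : N) (S : Finset N) (y : M)
    (j : N) (hj : j ∈ S) :
    lam * dA d i j + (1 - lam) * dC d i y ≤ wLoss d lam i S y := by
  unfold wLoss
  have hsup : dA d i j ≤ ((S.sup fun j' => d (Sum.inl i) (Sum.inl j') : NNReal) : ℝ) := by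
    exact_mod_cast Finset.le_sup (f := fun j' => d (Sum.inl i) (Sum.inl j')) hj
  have h2 := mul_le_mul_of_nonneg_left hsup h0
  have e : ((d (Sum.inl i) (Sum.inr y) : NNReal) : ℝ) = dC d i y := rfl
  rw [e]
  linarith

lemma wLoss_nonneg (lam : ℝ) (h0 : 0 ≤ lam) (h1 : lam ≤ 1) (i : N) (S : Finset N) (y : M) :
    0 ≤ wLoss d lam i S y := by
  unfold wLoss
  have e1 := NNReal.coe_nonneg (S.sup fun j' => d (Sum.inl i) (Sum.inl j'))
  have e2 := NNReal.coe_nonneg (d (Sum.inl i) (Sum.inr y))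
  nlinarith

/-- All the real-arithmetic facts needed about `α` and `κ`. -/
lemma keyAlgebra (lam α : ℝ) (h0 : 0 ≤ lam) (h1 : lam < 1)
    (hα : α = (Real.sqrt (2 * lam - 11 * lam ^ 2 + 13) + 3 - lam) / (2 - 2 * lam)) :
    0 < α ∧ ∃ κ : ℝ, lam ≤ κ ∧ 0 ≤ κ ∧ α * (κ - lam) = 1 + κ ∧
      (1 + α * lam) * (1 + κ) ≤ α * (1 - lam) * (α - 2 - κ) := by
  have h2l : (0:ℝ) < 2 - 2 * lam := by linarith
  set u := Real.sqrt (2 * lam - 11 * lam ^ 2 + 13) with hu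
  have hu0 : 0 ≤ u := Real.sqrt_nonneg _
  have hD0 : (0:ℝ) ≤ 2 * lam - 11 * lam ^ 2 + 13 := by nlinarith
  have hu2 : u ^ 2 = 2 * lam - 11 * lam ^ 2 + 13 := Real.sq_sqrt hD0
  have hu1 : 1 + lam ≤ u := by nlinarith [hu2, hu0]
  have hαeq : α * (2 - 2 * lam) = u + 3 - lam := by
    rw [hα]; exact div_mul_cancel₀ _ h2l.ne'
  have hα0 : 0 < α := by
    rw [hα]; exact div_pos (by linarith) h2l
  have hαg : 2 ≤ α * (1 - lam) := by
    have hr : α * (2 - 2 * lam) = 2 * (α * (1 - lam)) := by ring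
    linarith [hαeq, hu1]
  have hα1 : 1 < α := by
    have hr2 : α * (1 - lam) + α * lam = α := by ring
    have hr3 : 0 ≤ α * lam := mul_nonneg hα0.le h0
    linarith
  have hroot : (1 - lam) * α ^ 2 - (3 - lam) * α - (1 + 3 * lam) = 0 := by
    have h4 : 4 * (1 - lam) * ((1 - lam) * α ^ 2 - (3 - lam) * α - (1 + 3 * lam))
        = u ^ 2 - (2 * lam - 11 * lam ^ 2 + 13) := by
      linear_combination (u + 2 * (1 - lam) * α - 3 + lam) * hαeq
    rw [hu2, sub_self] at h4
    rcases mul_eq_zero.1 h4 with h | h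
    · exfalso; nlinarith
    · exact h
  have hαne : (0:ℝ) < α - 1 := by linarith
  refine ⟨hα0, (1 + α * lam) / (α - 1), ?_, ?_, ?_, ?_⟩
  · rw [le_div_iff₀ hαne]
    nlinarith [mul_nonneg hα0.le h0]
  · apply div_nonneg _ hαne.le
    nlinarith [mul_nonneg hα0.le h0]
  · field_simp
    ring
  · set κv := (1 + α * lam) / (α - 1) with hκv
    have hκeq : κv * (α - 1) = 1 + α * lam := by
      rw [hκv]; field_simp
    have hE : (α * (1 - lam) * (α - 2 - κv) - (1 + α * lam) * (1 + κv)) * (α - 1)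
        = α * (1 + lam) := by
      linear_combination α * hroot + (-(α * (1 - lam)) - (1 + α * lam)) * hκeq
    by_contra hc
    push_neg at hc
    have h6 : (α * (1 - lam) * (α - 2 - κv) - (1 + α * lam) * (1 + κv)) * (α - 1) < 0 :=
      mul_neg_of_neg_of_pos (by linarith) hαne
    rw [hE] at h6
    nlinarith [hα0]

end SemiBallCore

set_option maxHeartbeats 1600000 in
/-- For every semi-centroid clustering instance with the weighted single metric loss with
parameter `λ ∈ [0,1)`, there exists a clustering in the `α`-core for
`α = (√(2λ − 11λ² + 13) + 3 − λ)/(2 − 2λ)`. -/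
theorem exists_core_weighted_semiBall {N M : Type*} [Fintype N] [Nonempty N]
    [Fintype M] [Nonempty M] {k : ℕ} (hk : 1 ≤ k)
    (d : N ⊕ M → N ⊕ M → NNReal) (hd : IsPseudometric d)
    (lam : ℝ) (hlam0 : 0 ≤ lam) (hlam1 : lam < 1) :
    ∃ X : Clustering N M k, InCore X (wLoss d lam)
      ((Real.sqrt (2 * lam - 11 * lam ^ 2 + 13) + 3 - lam) / (2 - 2 * lam)) := by
  classical
  obtain ⟨α, hα⟩ : ∃ a : ℝ,
      a = (Real.sqrt (2 * lam - 11 * lam ^ 2 + 13) + 3 - lam) / (2 - 2 * lam) := ⟨_, rfl⟩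
  rw [← hα]
  obtain ⟨hα0, κ, hκlam, hκ0, hκα, hcond2⟩ := SemiBallCore.keyAlgebra lam α hlam0 hlam1 hα
  have hκ1 : (0:ℝ) ≤ 1 + κ := by linarith
  have hn1 : 1 ≤ Fintype.card N := Fintype.card_pos
  obtain ⟨s, hs⟩ : ∃ s : ℕ, s = (Fintype.card N + k - 1) / k := ⟨_, rfl⟩
  have hdm := Nat.div_add_mod (Fintype.card N + k - 1) k
  have hml : (Fintype.card N + k - 1) % k < k := Nat.mod_lt _ (by omega)
  have hnk : Fintype.card N ≤ k * s := by rw [hs]; omega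
  have hs1 : 1 ≤ s := by
    rw [hs]; exact Nat.div_pos (by omega) (by omega)
  have hks : ∀ z : N, SemiBallCore.sig d s lam κ z < k :=
    fun z => SemiBallCore.sig_lt d s lam κ hlam0 hκlam hs1 hnk z
  refine ⟨SemiBallCore.buildX d s lam κ k hks, ?_⟩
  intro hblk
  obtain ⟨S, y, hsize, hblock⟩ := hblk
  set X := SemiBallCore.buildX d s lam κ k hks with hX
  -- blocking coalitions have at least s members
  have hk0 : (0:ℝ) < (k : ℝ) := by exact_mod_cast hk
  have hnS : Fintype.card N ≤ S.card * k := by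
    have h2 := (div_le_iff₀ hk0).1 hsize
    exact_mod_cast h2
  have hSs : s ≤ S.card := by
    by_contra hc
    push_neg at hc
    have h1 : S.card + 1 ≤ s := hc
    have h2 : k * (S.card + 1) ≤ k * s := Nat.mul_le_mul_left k h1
    have h3 : k * (S.card + 1) = k * S.card + k := by ring
    have h4 : k * S.card = S.card * k := by ring
    rw [hs] at h2
    omega
  obtain ⟨T, hTS, hTcard⟩ := Finset.exists_subset_card_eq hSs
  have hTne : T.Nonempty := Finset.card_pos.1 (by rw [hTcard]; omega)
  obtain ⟨w, hwT, hwmax⟩ := Finset.exists_max_image T (fun i => SemiBallCore.dC d i y) hTne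
  -- phase-1 first touch of T
  obtain ⟨x1, r1, B1, hmem, hr1, i0, hi0B, hi0T⟩ :=
    SemiBallCore.ph_first_touch d s hd (Fintype.card N) univ T y w hs1
      (by rw [hTcard]) (subset_univ T) hwT hwmax (by rw [card_univ])
  obtain ⟨hBsub, hr1nn, hBcard, hBball⟩ := SemiBallCore.ph_balls d s _ univ hmem
  obtain ⟨t1, ht1m, hcx, hrx⟩ := SemiBallCore.mem_rounds_index d s hmem
  have hi0x : SemiBallCore.dC d i0 x1 ≤ r1 := hBball i0 hi0B
  have hi0S : i0 ∈ S := hTS hi0T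
  have hwS : w ∈ S := hTS hwT
  have hrSnn : 0 ≤ SemiBallCore.dC d w y := SemiBallCore.dC_nonneg d w y
  have hb0nn : 0 ≤ SemiBallCore.dC d i0 y := SemiBallCore.dC_nonneg d i0 y
  have ht1el : t1 ∈ SemiBallCore.elig d s lam κ i0 := by
    rw [SemiBallCore.elig, mem_filter, mem_range]
    refine ⟨ht1m, ?_⟩
    rw [hcx, hrx]
    calc lam * SemiBallCore.dC d i0 x1 ≤ lam * r1 :=
          mul_le_mul_of_nonneg_left hi0x hlam0
      _ ≤ κ * r1 := mul_le_mul_of_nonneg_right hκlam hr1nn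
  have hLi : X.loss (wLoss d lam) i0 ≤ SemiBallCore.dC d i0 x1 + κ * r1 := by
    have h := SemiBallCore.loss_le d s lam κ k hd hlam0 hks i0 t1 ht1el
    rwa [SemiBallCore.vval, hcx, hrx] at h
  have hbi := hblock i0 hi0S
  have hbw := hblock w hwS
  have hwl1 : (1 - lam) * SemiBallCore.dC d i0 y ≤ wLoss d lam i0 S y := by
    have h := SemiBallCore.wLoss_lb d lam hlam0 hlam1.le i0 S y i0 hi0S
    rw [SemiBallCore.dA_self d hd] at h
    linarith
  have hwl2 : lam * SemiBallCore.dA d i0 w + (1 - lam) * SemiBallCore.dC d i0 y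
      ≤ wLoss d lam i0 S y :=
    SemiBallCore.wLoss_lb d lam hlam0 hlam1.le i0 S y w hwS
  have hwl3 : lam * SemiBallCore.dA d w i0 + (1 - lam) * SemiBallCore.dC d w y
      ≤ wLoss d lam w S y :=
    SemiBallCore.wLoss_lb d lam hlam0 hlam1.le w S y i0 hi0S
  have htr1 : SemiBallCore.dA d w i0 ≤ SemiBallCore.dC d w y + SemiBallCore.dC d i0 y :=
    SemiBallCore.tri_ACA d hd w i0 y
  have htr2 : SemiBallCore.dC d w y - SemiBallCore.dC d i0 y ≤ SemiBallCore.dA d w i0 := by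
    have := SemiBallCore.tri_CAC d hd w i0 y
    linarith
  have htr3 : SemiBallCore.dC d w x1
      ≤ SemiBallCore.dA d w i0 + SemiBallCore.dC d i0 x1 :=
    SemiBallCore.tri_CAC d hd w i0 x1
  have hAsym : SemiBallCore.dA d i0 w = SemiBallCore.dA d w i0 :=
    SemiBallCore.dA_symm d hd i0 w
  have hposA : 0 < α * (1 - lam) := mul_pos hα0 (by linarith)
  have hpos2 : 0 < 1 + α * lam := by nlinarith [mul_nonneg hα0.le hlam0]
  by_cases hcase : lam * SemiBallCore.dC d w x1 ≤ κ * r1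
  · -- CASE 1 : w is eligible for the first-touch cluster
    have ht1elw : t1 ∈ SemiBallCore.elig d s lam κ w := by
      rw [SemiBallCore.elig, mem_filter, mem_range]
      exact ⟨ht1m, by rw [hcx, hrx]; exact hcase⟩
    have hLw : X.loss (wLoss d lam) w ≤ SemiBallCore.dC d w x1 + κ * r1 := by
      have h := SemiBallCore.loss_le d s lam κ k hd hlam0 hks w t1 ht1elw
      rwa [SemiBallCore.vval, hcx, hrx] at h
    have hκr : κ * r1 ≤ κ * SemiBallCore.dC d w y := mul_le_mul_of_nonneg_left hr1 hκ0
    have hI : α * ((1 - lam) * SemiBallCore.dC d i0 y) < (1 + κ) * SemiBallCore.dC d w y := by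
      have c1 : α * ((1 - lam) * SemiBallCore.dC d i0 y) ≤ α * wLoss d lam i0 S y :=
        mul_le_mul_of_nonneg_left hwl1 hα0.le
      have c2 : X.loss (wLoss d lam) i0 ≤ (1 + κ) * SemiBallCore.dC d w y := by
        linarith [hLi, hi0x, hr1, hκr]
      linarith [hbi]
    have hII : α * (SemiBallCore.dC d w y - lam * SemiBallCore.dC d i0 y)
        < (2 + κ) * SemiBallCore.dC d w y + SemiBallCore.dC d i0 y := by
      have c1 : lam * (SemiBallCore.dC d w y - SemiBallCore.dC d i0 y)
          + (1 - lam) * SemiBallCore.dC d w y ≤ wLoss d lam w S y := by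
        have := mul_le_mul_of_nonneg_left htr2 hlam0
        linarith [hwl3]
      have c2 : α * (lam * (SemiBallCore.dC d w y - SemiBallCore.dC d i0 y)
          + (1 - lam) * SemiBallCore.dC d w y) ≤ α * wLoss d lam w S y :=
        mul_le_mul_of_nonneg_left c1 hα0.le
      have c3 : X.loss (wLoss d lam) w
          ≤ (2 + κ) * SemiBallCore.dC d w y + SemiBallCore.dC d i0 y := by
        linarith [hLw, htr3, htr1, hi0x, hr1, hκr]
      have c4 : α * (SemiBallCore.dC d w y - lam * SemiBallCore.dC d i0 y)
          = α * (lam * (SemiBallCore.dC d w y - SemiBallCore.dC d i0 y)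
            + (1 - lam) * SemiBallCore.dC d w y) := by ring
      rw [c4]
      linarith [hbw, c2, c3]
    rcases le_or_gt (SemiBallCore.dC d w y) 0 with hrs0 | hrs0
    · have h1 : 0 ≤ α * ((1 - lam) * SemiBallCore.dC d i0 y) :=
        mul_nonneg hα0.le (mul_nonneg (by linarith) hb0nn)
      have h2 : (1 + κ) * SemiBallCore.dC d w y ≤ 0 :=
        mul_nonpos_of_nonneg_of_nonpos hκ1 hrs0
      linarith [hI]
    · have e1 : (α - 2 - κ) * SemiBallCore.dC d w y
          < (1 + α * lam) * SemiBallCore.dC d i0 y := by linarith [hII]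
      have e2 : α * (1 - lam) * SemiBallCore.dC d i0 y
          < (1 + κ) * SemiBallCore.dC d w y := by linarith [hI]
      have p1 : α * (1 - lam) * ((α - 2 - κ) * SemiBallCore.dC d w y)
          < α * (1 - lam) * ((1 + α * lam) * SemiBallCore.dC d i0 y) :=
        mul_lt_mul_of_pos_left e1 hposA
      have p2 : (1 + α * lam) * (α * (1 - lam) * SemiBallCore.dC d i0 y)
          < (1 + α * lam) * ((1 + κ) * SemiBallCore.dC d w y) :=
        mul_lt_mul_of_pos_left e2 hpos2
      have p3 : (1 + α * lam) * (1 + κ) * SemiBallCore.dC d w y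
          ≤ α * (1 - lam) * (α - 2 - κ) * SemiBallCore.dC d w y :=
        mul_le_mul_of_nonneg_right hcond2 hrSnn
      linarith [p1, p2, p3]
  · -- CASE 2 : w is out of reach of the first-touch cluster
    push_neg at hcase
    have hlow : SemiBallCore.dC d w x1 - r1 ≤ SemiBallCore.dA d i0 w := by
      rw [hAsym]; linarith [htr3, hi0x]
    have h2 : (κ - lam) * r1 < lam * (SemiBallCore.dC d w x1 - r1) := by
      linarith [hcase]
    have h3 : (1 + κ) * r1 < α * (lam * (SemiBallCore.dC d w x1 - r1)) := by
      have h4 : α * ((κ - lam) * r1) < α * (lam * (SemiBallCore.dC d w x1 - r1)) :=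
        mul_lt_mul_of_pos_left h2 hα0
      have h5 : α * ((κ - lam) * r1) = (α * (κ - lam)) * r1 := by ring
      rw [hκα] at h5
      linarith
    have h6 : α * (lam * (SemiBallCore.dC d w x1 - r1)) ≤ α * wLoss d lam i0 S y := by
      apply mul_le_mul_of_nonneg_left _ hα0.le
      have h7 : lam * (SemiBallCore.dC d w x1 - r1) ≤ lam * SemiBallCore.dA d i0 w :=
        mul_le_mul_of_nonneg_left hlow hlam0
      have h8 : 0 ≤ (1 - lam) * SemiBallCore.dC d i0 y :=
        mul_nonneg (by linarith) hb0nn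
      linarith [hwl2]
    have h9 : α * wLoss d lam i0 S y < (1 + κ) * r1 := by
      have h10 : X.loss (wLoss d lam) i0 ≤ (1 + κ) * r1 := by linarith [hLi, hi0x]
      linarith [hbi]
    linarith [h3, h6, h9]
end
end

section
/- For every λ ∈ [0,1] and every real α with 1 ≤ α < (√(λ² − 2λ + 5) − λ + 1)/2, there exists a semi-centroid clustering instance equipped with the weighted single metric loss with parameter λ in which no clustering is in the α-core. -/
open Finset

/- ================= auxiliary construction ================= -/

def vidx : Fin 6 ⊕ Fin 6 → ℕ
  | .inl i => 2 * (i.val % 3)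
  | .inr y => 2 * (y.val % 3) + 1

def inA : Fin 6 ⊕ Fin 6 → Bool
  | .inl i => decide (i.val < 3)
  | .inr y => decide (y.val < 3)

noncomputable def ct (b1 b2 : Bool) (w : ℝ) : ℝ := if b1 = b2 then 0 else w

lemma ct_nonneg (b1 b2 : Bool) {w : ℝ} (hw : 0 ≤ w) : 0 ≤ ct b1 b2 w := by
  unfold ct; split_ifs <;> [exact le_refl 0; exact hw]

lemma ct_tri (b1 b2 b3 : Bool) {w : ℝ} (hw : 0 ≤ w) :
    ct b1 b2 w ≤ ct b1 b3 w + ct b3 b2 w := by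
  unfold ct; cases b1 <;> cases b2 <;> cases b3 <;> simp <;> linarith

noncomputable def dRf (del F : ℝ) (x y : Fin 6 ⊕ Fin 6) : ℝ :=
  ct (decide (vidx x ≤ 1)) (decide (vidx y ≤ 1)) ((1-del)/2)
  + ct (decide (2 ≤ vidx x ∧ vidx x ≤ 3)) (decide (2 ≤ vidx y ∧ vidx y ≤ 3)) ((1-del)/2)
  + ct (decide (4 ≤ vidx x)) (decide (4 ≤ vidx y)) ((1-del)/2)
  + ct (decide (vidx x ≤ 2)) (decide (vidx y ≤ 2)) del
  + ct (decide (1 ≤ vidx x ∧ vidx x ≤ 3)) (decide (1 ≤ vidx y ∧ vidx y ≤ 3)) del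
  + ct (decide (2 ≤ vidx x ∧ vidx x ≤ 4)) (decide (2 ≤ vidx y ∧ vidx y ≤ 4)) del
  + ct (inA x) (inA y) F

noncomputable def dNf (del F : ℝ) (x y : Fin 6 ⊕ Fin 6) : NNReal :=
  (dRf del F x y).toNNReal


section basic
variable {del F : ℝ}

lemma dRf_nonneg (h0 : 0 ≤ del) (h1 : del ≤ 1) (hF : 0 ≤ F) (x y : Fin 6 ⊕ Fin 6) :
    0 ≤ dRf del F x y := by
  have ha : (0:ℝ) ≤ (1-del)/2 := by linarith
  unfold dRf
  have t1 := ct_nonneg (decide (vidx x ≤ 1)) (decide (vidx y ≤ 1)) ha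
  have t2 := ct_nonneg (decide (2 ≤ vidx x ∧ vidx x ≤ 3)) (decide (2 ≤ vidx y ∧ vidx y ≤ 3)) ha
  have t3 := ct_nonneg (decide (4 ≤ vidx x)) (decide (4 ≤ vidx y)) ha
  have t4 := ct_nonneg (decide (vidx x ≤ 2)) (decide (vidx y ≤ 2)) h0
  have t5 := ct_nonneg (decide (1 ≤ vidx x ∧ vidx x ≤ 3)) (decide (1 ≤ vidx y ∧ vidx y ≤ 3)) h0
  have t6 := ct_nonneg (decide (2 ≤ vidx x ∧ vidx x ≤ 4)) (decide (2 ≤ vidx y ∧ vidx y ≤ 4)) h0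
  have t7 := ct_nonneg (inA x) (inA y) hF
  linarith

lemma dRf_self (x : Fin 6 ⊕ Fin 6) : dRf del F x x = 0 := by
  unfold dRf ct; simp

lemma dRf_symm (x y : Fin 6 ⊕ Fin 6) : dRf del F x y = dRf del F y x := by
  have hc : ∀ (b1 b2 : Bool) (w : ℝ), ct b1 b2 w = ct b2 b1 w := by
    intro b1 b2 w; unfold ct; cases b1 <;> cases b2 <;> simp
  unfold dRf
  rw [hc (decide (vidx x ≤ 1)), hc (decide (2 ≤ vidx x ∧ vidx x ≤ 3)),
    hc (decide (4 ≤ vidx x)), hc (decide (vidx x ≤ 2)),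
    hc (decide (1 ≤ vidx x ∧ vidx x ≤ 3)), hc (decide (2 ≤ vidx x ∧ vidx x ≤ 4)), hc (inA x)]

lemma dRf_tri (h0 : 0 ≤ del) (h1 : del ≤ 1) (hF : 0 ≤ F) (x y z : Fin 6 ⊕ Fin 6) :
    dRf del F x y ≤ dRf del F x z + dRf del F z y := by
  have ha : (0:ℝ) ≤ (1-del)/2 := by linarith
  unfold dRf
  have t1 := ct_tri (decide (vidx x ≤ 1)) (decide (vidx y ≤ 1)) (decide (vidx z ≤ 1)) ha
  have t2 := ct_tri (decide (2 ≤ vidx x ∧ vidx x ≤ 3)) (decide (2 ≤ vidx y ∧ vidx y ≤ 3)) (decide (2 ≤ vidx z ∧ vidx z ≤ 3)) ha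
  have t3 := ct_tri (decide (4 ≤ vidx x)) (decide (4 ≤ vidx y)) (decide (4 ≤ vidx z)) ha
  have t4 := ct_tri (decide (vidx x ≤ 2)) (decide (vidx y ≤ 2)) (decide (vidx z ≤ 2)) h0
  have t5 := ct_tri (decide (1 ≤ vidx x ∧ vidx x ≤ 3)) (decide (1 ≤ vidx y ∧ vidx y ≤ 3)) (decide (1 ≤ vidx z ∧ vidx z ≤ 3)) h0
  have t6 := ct_tri (decide (2 ≤ vidx x ∧ vidx x ≤ 4)) (decide (2 ≤ vidx y ∧ vidx y ≤ 4)) (decide (2 ≤ vidx z ∧ vidx z ≤ 4)) h0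
  have t7 := ct_tri (inA x) (inA y) (inA z) hF
  linarith

lemma dNf_coe (h0 : 0 ≤ del) (h1 : del ≤ 1) (hF : 0 ≤ F) (x y : Fin 6 ⊕ Fin 6) :
    ((dNf del F x y : NNReal) : ℝ) = dRf del F x y :=
  Real.coe_toNNReal _ (dRf_nonneg h0 h1 hF x y)

lemma dNf_pseudo (h0 : 0 ≤ del) (h1 : del ≤ 1) (hF : 0 ≤ F) :
    IsPseudometric (dNf del F) := by
  refine ⟨fun x => ?_, fun x y => ?_, fun x y z => ?_⟩
  · unfold dNf; rw [dRf_self]; exact Real.toNNReal_zero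
  · unfold dNf; rw [dRf_symm]
  · rw [← NNReal.coe_le_coe, NNReal.coe_add, dNf_coe h0 h1 hF, dNf_coe h0 h1 hF,
      dNf_coe h0 h1 hF]
    exact dRf_tri h0 h1 hF x y z

lemma dNf_zero (x : Fin 6 ⊕ Fin 6) : dNf del F x x = 0 := by
  unfold dNf; rw [dRf_self]; exact Real.toNNReal_zero

lemma fv3 : (3:Fin 6).val = 3 := rfl
lemma fv4 : (4:Fin 6).val = 4 := rfl
lemma fv5 : (5:Fin 6).val = 5 := rfl

lemma dRf_cross (h0 : 0 ≤ del) (h1 : del ≤ 1) (hF : 0 ≤ F) (x y : Fin 6 ⊕ Fin 6)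
    (h : inA x ≠ inA y) : F ≤ dRf del F x y := by
  have ha : (0:ℝ) ≤ (1-del)/2 := by linarith
  unfold dRf
  have t1 := ct_nonneg (decide (vidx x ≤ 1)) (decide (vidx y ≤ 1)) ha
  have t2 := ct_nonneg (decide (2 ≤ vidx x ∧ vidx x ≤ 3)) (decide (2 ≤ vidx y ∧ vidx y ≤ 3)) ha
  have t3 := ct_nonneg (decide (4 ≤ vidx x)) (decide (4 ≤ vidx y)) ha
  have t4 := ct_nonneg (decide (vidx x ≤ 2)) (decide (vidx y ≤ 2)) h0
  have t5 := ct_nonneg (decide (1 ≤ vidx x ∧ vidx x ≤ 3)) (decide (1 ≤ vidx y ∧ vidx y ≤ 3)) h0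
  have t6 := ct_nonneg (decide (2 ≤ vidx x ∧ vidx x ≤ 4)) (decide (2 ≤ vidx y ∧ vidx y ≤ 4)) h0
  have t7 : ct (inA x) (inA y) F = F := if_neg h
  linarith

end basic

/- ================= generic clustering lemmas ================= -/

lemma mem_own {N M : Type*} {k : ℕ} (X : Clustering N M k) (i : N) :
    i ∈ X.part (X.idx i) :=
  (X.partition i).exists.choose_spec

lemma loss_def {N M : Type*} {k : ℕ} (X : Clustering N M k)
    (l : N → Finset N → M → ℝ) (i : N) :
    X.loss l i = l i (X.part (X.idx i)) (X.cent (X.idx i)) := rfl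

lemma loss_lb {k : ℕ} (X : Clustering (Fin 6) (Fin 6) k)
    (d : Fin 6 ⊕ Fin 6 → Fin 6 ⊕ Fin 6 → NNReal) (lam : ℝ) (hlam : 0 ≤ lam)
    (i p : Fin 6) (hp : p ∈ X.part (X.idx i)) :
    lam * ((d (.inl i) (.inl p) : NNReal) : ℝ)
      + (1-lam) * ((d (.inl i) (.inr (X.cent (X.idx i))) : NNReal) : ℝ)
      ≤ X.loss (wLoss d lam) i := by
  rw [loss_def]
  unfold wLoss
  have hsup : (d (.inl i) (.inl p))
      ≤ ((X.part (X.idx i)).sup fun j => d (.inl i) (.inl j)) :=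
    Finset.le_sup (f := fun j => d (.inl i) (.inl j)) hp
  have hsup' := NNReal.coe_le_coe.mpr hsup
  have := mul_le_mul_of_nonneg_left hsup' hlam
  linarith

lemma devval {k : ℕ} (d : Fin 6 ⊕ Fin 6 → Fin 6 ⊕ Fin 6 → NNReal)
    (hd0 : ∀ x, d x x = 0) (lam : ℝ) (i j y : Fin 6) (hij : i ≠ j) :
    wLoss d lam i {i,j} y
      = lam * ((d (.inl i) (.inl j) : NNReal) : ℝ)
        + (1-lam) * ((d (.inl i) (.inr y) : NNReal) : ℝ) := by
  unfold wLoss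
  have : ({i,j} : Finset (Fin 6)).sup (fun j' => d (.inl i) (.inl j'))
      = d (.inl i) (.inl j) := by
    rw [show ({i,j} : Finset (Fin 6)) = insert i {j} from rfl, Finset.sup_insert,
      Finset.sup_singleton, hd0]
    exact sup_eq_right.mpr zero_le
  rw [this]

lemma devval2 {k : ℕ} (d : Fin 6 ⊕ Fin 6 → Fin 6 ⊕ Fin 6 → NNReal)
    (hd0 : ∀ x, d x x = 0) (lam : ℝ) (i j y : Fin 6) (hij : i ≠ j) :
    wLoss d lam j {i,j} y
      = lam * ((d (.inl j) (.inl i) : NNReal) : ℝ)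
        + (1-lam) * ((d (.inl j) (.inr y) : NNReal) : ℝ) := by
  rw [Finset.pair_comm i j]
  exact devval d hd0 lam j i y hij.symm (k := k)

lemma block2 (X : Clustering (Fin 6) (Fin 6) 3)
    (d : Fin 6 ⊕ Fin 6 → Fin 6 ⊕ Fin 6 → NNReal) (lam α : ℝ)
    (i j y : Fin 6) (hij : i ≠ j)
    (h1 : α * wLoss d lam i {i,j} y < X.loss (wLoss d lam) i)
    (h2 : α * wLoss d lam j {i,j} y < X.loss (wLoss d lam) j) :
    ¬ InCore X (wLoss d lam) α := by
  intro hc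
  refine hc ⟨{i,j}, y, ?_, ?_⟩
  · rw [Finset.card_pair hij]
    norm_num
  · intro i' hi'
    rcases Finset.mem_insert.mp hi' with rfl | hi'
    · exact h1
    · rw [Finset.mem_singleton.mp hi']
      exact h2

/- ================= the core copy-blocking lemma ================= -/

lemma core_block (X : Clustering (Fin 6) (Fin 6) 3)
    (d : Fin 6 ⊕ Fin 6 → Fin 6 ⊕ Fin 6 → NNReal)
    (lam α del : ℝ) (A Q : Fin 3 → Fin 6)
    (hlam0 : 0 ≤ lam) (hα1 : 1 ≤ α) (hδ0 : 0 < del)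
    (hd0 : ∀ x, d x x = 0)
    (hAinj : ∀ u v : Fin 3, u ≠ v → A u ≠ A v)
    (hAA : ∀ u v : Fin 3, u ≠ v →
      ((d (.inl (A u)) (.inl (A v)) : NNReal) : ℝ) = 1 + del)
    (hQ0 : ∀ u : Fin 3, ((d (.inl (A u)) (.inr (Q u)) : NNReal) : ℝ) = del)
    (hQ1 : ∀ u : Fin 3, ((d (.inl (A (u+1))) (.inr (Q u)) : NNReal) : ℝ) = 1)
    (hQ2 : ∀ u : Fin 3, ((d (.inl (A (u+2))) (.inr (Q u)) : NNReal) : ℝ) = 1 + 2*del)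
    (hQub : ∀ u v : Fin 3, ((d (.inl (A u)) (.inr (Q v)) : NNReal) : ℝ) ≤ 1 + 2*del)
    (hfar : ∀ (u : Fin 3) (y : Fin 6), (∀ v : Fin 3, y ≠ Q v) →
      10 ≤ (1-lam) * ((d (.inl (A u)) (.inr y) : NNReal) : ℝ))
    (hund : ∀ u v : Fin 3, (∃ a, X.cent (X.idx (A u)) = Q a) →
      (∃ b, X.cent (X.idx (A v)) = Q b) → X.idx (A u) = X.idx (A v))
    (hE1 : α * (lam*(1+del) + (1-lam)*del) < lam*(1+del) + (1-lam))
    (hE2 : α * (lam*(1+del) + (1-lam)) < lam*(1+del) + (1-lam)*(1+2*del))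
    (hEbig : ∀ e : ℝ, 0 ≤ e → e ≤ 1+2*del → α * (lam*(1+del) + (1-lam)*e) < 10) :
    ¬ InCore X (wLoss d lam) α := by
  set T : Fin 3 → Prop := fun u => ∃ a, X.cent (X.idx (A u)) = Q a with hT
  -- loss lower bound for far-served agents
  have hFloss : ∀ m : Fin 3, ¬ T m → 10 ≤ X.loss (wLoss d lam) (A m) := by
    intro m hm
    have hm' : ∀ v : Fin 3, X.cent (X.idx (A m)) ≠ Q v := fun v hv => hm ⟨v, hv⟩
    have h10 := hfar m (X.cent (X.idx (A m))) hm'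
    have hlb := loss_lb X d lam hlam0 (A m) (A m) (mem_own X (A m))
    rw [hd0 (.inl (A m))] at hlb
    simp only [NNReal.coe_zero, mul_zero, zero_add] at hlb
    linarith
  by_cases hFF : ∃ u v : Fin 3, u ≠ v ∧ ¬ T u ∧ ¬ T v
  · obtain ⟨u, v, huv, hTu, hTv⟩ := hFF
    have cu := hFloss u hTu
    have cv := hFloss v hTv
    refine block2 X d lam α (A u) (A v) (Q u) (hAinj u v huv) ?_ ?_
    · rw [devval d hd0 lam _ _ _ (hAinj u v huv) (k := 3), hAA u v huv, hQ0 u]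
      have := hEbig del hδ0.le (by linarith)
      linarith
    · rw [devval2 d hd0 lam _ _ _ (hAinj u v huv) (k := 3), hAA v u huv.symm]
      have hub := hQub v u
      have hnn : (0:ℝ) ≤ ((d (.inl (A v)) (.inr (Q u)) : NNReal) : ℝ) := NNReal.coe_nonneg _
      have := hEbig _ hnn hub
      linarith
  · -- at least two agents have copy-local centers
    have htwo : ∃ u1 u2 : Fin 3, u1 ≠ u2 ∧ T u1 ∧ T u2 := by
      by_cases hT0 : T 0
      · by_cases hT1 : T 1
        · exact ⟨0, 1, by decide, hT0, hT1⟩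
        · by_cases hT2 : T 2
          · exact ⟨0, 2, by decide, hT0, hT2⟩
          · exact absurd ⟨1, 2, by decide, hT1, hT2⟩ hFF
      · by_cases hT1 : T 1
        · by_cases hT2 : T 2
          · exact ⟨1, 2, by decide, hT1, hT2⟩
          · exact absurd ⟨0, 2, by decide, hT0, hT2⟩ hFF
        · exact absurd ⟨0, 1, by decide, hT0, hT1⟩ hFF
    obtain ⟨u1, u2, hne, hTu1, hTu2⟩ := htwo
    obtain ⟨w, hw⟩ := hTu1
    -- loss lower bound for locally-served agents
    have hTloss : ∀ m : Fin 3, T m →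
        lam*(1+del) + (1-lam) * ((d (.inl (A m)) (.inr (Q w)) : NNReal) : ℝ)
          ≤ X.loss (wLoss d lam) (A m) := by
      intro m hTm
      have hu' : ∃ u' : Fin 3, u' ≠ m ∧ T u' := by
        by_cases h : m = u1
        · exact ⟨u2, by rw [h]; exact hne.symm, hTu2⟩
        · exact ⟨u1, fun hh => h hh.symm, ⟨w, hw⟩⟩
      obtain ⟨u', hu'm, hTu'⟩ := hu'
      have hidx : X.idx (A u') = X.idx (A m) := hund u' m hTu' hTm
      have hmem : A u' ∈ X.part (X.idx (A m)) := hidx ▸ mem_own X (A u')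
      have hlb := loss_lb X d lam hlam0 (A m) (A u') hmem
      rw [hAA m u' (fun hh => hu'm hh.symm)] at hlb
      have hcent : X.cent (X.idx (A m)) = Q w := by
        rw [← hund m u1 hTm ⟨w, hw⟩]  at hw
        exact hw
      rw [hcent] at hlb
      linarith
    have hadd : (w+1)+1 = w+2 := by
      rw [add_assoc]; norm_num; rfl
    have h12 : (w+1 : Fin 3) ≠ w+2 := by
      intro h
      have := add_left_cancel h
      exact absurd this (by decide)
    refine block2 X d lam α (A (w+1)) (A (w+2)) (Q (w+1)) (hAinj _ _ h12) ?_ ?_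
    · rw [devval d hd0 lam _ _ _ (hAinj _ _ h12) (k := 3), hAA _ _ h12, hQ0 (w+1)]
      by_cases hTm : T (w+1)
      · have hc := hTloss (w+1) hTm
        rw [hQ1 w] at hc
        linarith
      · have hc := hFloss (w+1) hTm
        have := hEbig del hδ0.le (by linarith)
        linarith
    · have hQ1' : ((d (.inl (A (w+2))) (.inr (Q (w+1))) : NNReal) : ℝ) = 1 := by
        have := hQ1 (w+1); rwa [hadd] at this
      rw [devval2 d hd0 lam _ _ _ (hAinj _ _ h12) (k := 3), hAA _ _ h12.symm, hQ1']
      by_cases hTm : T (w+2)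
      · have hc := hTloss (w+2) hTm
        rw [hQ2 w] at hc
        linarith
      · have hc := hFloss (w+2) hTm
        have := hEbig 1 (by norm_num) (by linarith)
        linarith

set_option maxHeartbeats 2000000 in
/-- Lower bound: for `λ ∈ [0,1]` and `1 ≤ α < (√(λ² − 2λ + 5) − λ + 1)/2`, there is a
weighted single metric instance in which no clustering is in the `α`-core. -/
theorem core_lower_bound_weighted (lam : ℝ) (hlam0 : 0 ≤ lam) (hlam1 : lam ≤ 1)
    (α : ℝ) (hα : 1 ≤ α)
    (hub : α < (Real.sqrt (lam ^ 2 - 2 * lam + 5) - lam + 1) / 2) :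
    ∃ (n m k : ℕ) (d : Fin n ⊕ Fin m → Fin n ⊕ Fin m → NNReal),
      1 ≤ n ∧ 1 ≤ m ∧ 1 ≤ k ∧ IsPseudometric d ∧
      ∀ X : Clustering (Fin n) (Fin m) k, ¬ InCore X (wLoss d lam) α := by
  -- arithmetic groundwork
  have h5 : (0:ℝ) ≤ lam ^ 2 - 2 * lam + 5 := by nlinarith [sq_nonneg (lam - 1)]
  have hs := Real.mul_self_sqrt h5
  have ht : 2*α + lam - 1 < Real.sqrt (lam ^ 2 - 2 * lam + 5) := by linarith
  have ht0 : (0:ℝ) ≤ 2*α + lam - 1 := by linarith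
  have hsq := mul_self_lt_mul_self ht0 ht
  have hK : α*α + α*lam - α < 1 := by nlinarith [hsq, hs]
  clear hs hsq ht ht0 hub h5
  have hβ0 : (0:ℝ) < 1 - lam := by
    nlinarith [hK, mul_nonneg (show (0:ℝ) ≤ α - 1 by linarith) hlam0,
      mul_nonneg (show (0:ℝ) ≤ α by linarith) (show (0:ℝ) ≤ α - 1 by linarith)]
  have hα2 : α < 2 := by
    nlinarith [hK, mul_nonneg (show (0:ℝ) ≤ α - 1 by linarith) (show (0:ℝ) ≤ α - 1 + lam by linarith)]
  have h1al : (0:ℝ) < 1 - α*lam := by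
    nlinarith [hK, mul_nonneg (show (0:ℝ) ≤ α by linarith) (show (0:ℝ) ≤ α - 1 by linarith)]
  have hal : (0:ℝ) < α - lam := by linarith
  have hden : (0:ℝ) < (1-lam) + 1 - α*lam := by linarith
  have hX : α*(α-1) < 1 - α*lam := by nlinarith [hK]
  have hA0 : (0:ℝ) ≤ α*(α-1) := mul_nonneg (by linarith) (by linarith)
  have hcpos : (0:ℝ) < (1-lam) + α*(α-1) := by linarith
  have hprod : α*(α-1) * ((1-lam) + α*(α-1)) < (1-α*lam)*((1-lam)+1-α*lam) := by
    calc α*(α-1) * ((1-lam) + α*(α-1)) < (1-α*lam) * ((1-lam) + α*(α-1)) :=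
          mul_lt_mul_of_pos_right hX hcpos
      _ ≤ (1-α*lam)*((1-lam)+1-α*lam) := by
          apply mul_le_mul_of_nonneg_left _ (by linarith)
          linarith
  have hkey : (α-1)*(α-lam) ≤ α*(α-1)*((1-lam)+α*(α-1)) := by
    nlinarith [mul_nonneg (sq_nonneg (α-1)) (show (0:ℝ) ≤ α*α - lam by nlinarith)]
  have hINEQ : (α-1)*(α-lam) < (1-α*lam)*((1-lam)+1-α*lam) := lt_of_le_of_lt hkey hprod
  obtain ⟨Lo, hLodef⟩ : ∃ x : ℝ, x = (α-1)/((1-lam)+1-α*lam) := ⟨_, rfl⟩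
  obtain ⟨U, hUdef⟩ : ∃ x : ℝ, x = (1-α*lam)/(α-lam) := ⟨_, rfl⟩
  have hLo0 : 0 ≤ Lo := by
    rw [hLodef]; exact div_nonneg (by linarith) hden.le
  have hU1 : U ≤ 1 := by
    rw [hUdef, div_le_one hal]
    nlinarith [mul_nonneg (show (0:ℝ) ≤ α - 1 by linarith) hlam0]
  have hLoU : Lo < U := by
    rw [hLodef, hUdef, div_lt_div_iff₀ hden hal]
    linarith [hINEQ]
  obtain ⟨del, hdeldef⟩ : ∃ x : ℝ, x = (Lo + U)/2 := ⟨_, rfl⟩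
  have hδ0 : 0 < del := by
    have : 0 < U := lt_of_le_of_lt hLo0 hLoU
    rw [hdeldef]; linarith
  have hδU : del < U := by rw [hdeldef]; linarith
  have hδLo : Lo < del := by rw [hdeldef]; linarith
  have hδ1 : del ≤ 1 := by linarith
  have hE1' : del * (α - lam) < 1 - α*lam := by
    have h := hδU
    rw [hUdef] at h
    have := (lt_div_iff₀ hal).mp h
    linarith
  have hE2' : α - 1 < del * ((1-lam)+1-α*lam) := by
    have h := hδLo
    rw [hLodef] at h
    have := (div_lt_iff₀ hden).mp h
    linarith
  have hE1 : α * (lam*(1+del) + (1-lam)*del) < lam*(1+del) + (1-lam) := by nlinarith [hE1']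
  have hE2 : α * (lam*(1+del) + (1-lam)) < lam*(1+del) + (1-lam)*(1+2*del) := by
    nlinarith [hE2']
  have hEbig : ∀ e : ℝ, 0 ≤ e → e ≤ 1+2*del → α * (lam*(1+del) + (1-lam)*e) < 10 := by
    intro e he0 he2
    have hin5 : lam*(1+del) + (1-lam)*e ≤ 5 := by
      nlinarith [mul_nonneg (by linarith : (0:ℝ) ≤ 1-lam) (by linarith : (0:ℝ) ≤ 1+del),
        mul_nonneg hlam0 he0]
    have hin0 : 0 ≤ lam*(1+del) + (1-lam)*e :=
      add_nonneg (mul_nonneg hlam0 (by linarith)) (mul_nonneg (by linarith) he0)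
    have := mul_le_mul_of_nonneg_left hin5 (show (0:ℝ) ≤ α by linarith)
    linarith
  obtain ⟨F, hFdef⟩ : ∃ x : ℝ, x = 10/(1-lam) := ⟨_, rfl⟩
  have hF0 : 0 ≤ F := by
    rw [hFdef]; exact div_nonneg (by norm_num) hβ0.le
  have hFeq : (1-lam)*F = 10 := by
    rw [hFdef]; field_simp
  refine ⟨6, 6, 3, dNf del F, by norm_num, by norm_num, by norm_num,
    dNf_pseudo hδ0.le hδ1 hF0, ?_⟩
  intro X
  clear hK hX hA0 hcpos hprod hkey hINEQ hLoU hLo0 hU1 hδU hδLo hE1' hE2' hLodef hUdef hdeldef hFdef hal h1al hden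
  have hd0 : ∀ x, dNf del F x x = 0 := fun x => dNf_zero x
  have hsplit := Finset.card_filter_add_card_filter_not
    (s := (Finset.univ : Finset (Fin 3))) (p := fun t => (X.cent t).val < 3)
  have huniv : (Finset.univ : Finset (Fin 3)).card = 3 := by simp
  rcases le_or_gt ((Finset.univ.filter (fun t => (X.cent t).val < 3)).card) 1 with hcard | hcard
  · -- copy A (agents 0,1,2 / centers 0,1,2) is underserved
    refine core_block X (dNf del F) lam α del
      (fun u => ⟨u.val, by omega⟩) (fun u => ⟨u.val, by omega⟩)
      hlam0 hα hδ0 hd0 ?_ ?_ ?_ ?_ ?_ ?_ ?_ ?_ hE1 hE2 hEbig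
    · intro u v huv h
      exact huv (Fin.ext (congrArg (fun z : Fin 6 => z.val) h))
    · intro u v huv
      fin_cases u <;> fin_cases v <;>
        first
        | exact absurd rfl huv
        | (rw [dNf_coe hδ0.le hδ1 hF0]; norm_num [dRf, ct, vidx, inA, Fin.add_def]; try ring)
    · intro u
      fin_cases u <;> (rw [dNf_coe hδ0.le hδ1 hF0]; norm_num [dRf, ct, vidx, inA, Fin.add_def]; try ring)
    · intro u
      fin_cases u <;> (rw [dNf_coe hδ0.le hδ1 hF0]; norm_num [dRf, ct, vidx, inA, Fin.add_def]; try ring)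
    · intro u
      fin_cases u <;> (rw [dNf_coe hδ0.le hδ1 hF0]; norm_num [dRf, ct, vidx, inA, Fin.add_def]; try ring)
    · intro u v
      fin_cases u <;> fin_cases v <;>
        (rw [dNf_coe hδ0.le hδ1 hF0]; norm_num [dRf, ct, vidx, inA, Fin.add_def] <;> linarith)
    · intro u y hy
      have h3 : ¬ (y.val < 3) := by
        intro h
        exact hy ⟨y.val, h⟩ (Fin.ext rfl)
      have hinA : inA (.inl (⟨u.val, by omega⟩ : Fin 6)) ≠ inA (.inr y) := by
        simp only [inA, ne_eq, decide_eq_decide]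
        intro hiff
        exact h3 (hiff.mp u.isLt)
      have hge := dRf_cross hδ0.le hδ1 hF0 _ _ hinA
      rw [dNf_coe hδ0.le hδ1 hF0]
      calc (10:ℝ) = (1-lam)*F := hFeq.symm
        _ ≤ (1-lam) * dRf del F (.inl (⟨u.val, by omega⟩ : Fin 6)) (.inr y) :=
            mul_le_mul_of_nonneg_left hge hβ0.le
    · intro u v hu hv
      obtain ⟨a, ha⟩ := hu
      obtain ⟨b, hb⟩ := hv
      refine Finset.card_le_one.mp hcard _ ?_ _ ?_
      · exact Finset.mem_filter.mpr ⟨Finset.mem_univ _, by rw [ha]; exact a.isLt⟩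
      · exact Finset.mem_filter.mpr ⟨Finset.mem_univ _, by rw [hb]; exact b.isLt⟩
  · -- copy B (agents 3,4,5 / centers 3,4,5) is underserved
    have hcard' : (Finset.univ.filter (fun t => ¬ (X.cent t).val < 3)).card ≤ 1 := by
      omega
    refine core_block X (dNf del F) lam α del
      (fun u => ⟨u.val + 3, by omega⟩) (fun u => ⟨u.val + 3, by omega⟩)
      hlam0 hα hδ0 hd0 ?_ ?_ ?_ ?_ ?_ ?_ ?_ ?_ hE1 hE2 hEbig
    · intro u v huv h
      apply huv
      apply Fin.ext
      have h3 : u.val + 3 = v.val + 3 := congrArg (fun z : Fin 6 => z.val) h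
      omega
    · intro u v huv
      fin_cases u <;> fin_cases v <;>
        first
        | exact absurd rfl huv
        | (rw [dNf_coe hδ0.le hδ1 hF0]; norm_num [dRf, ct, vidx, inA, Fin.add_def]; try ring)
    · intro u
      fin_cases u <;> (rw [dNf_coe hδ0.le hδ1 hF0]; norm_num [dRf, ct, vidx, inA, Fin.add_def]; try ring)
    · intro u
      fin_cases u <;> (rw [dNf_coe hδ0.le hδ1 hF0]; norm_num [dRf, ct, vidx, inA, Fin.add_def]; try ring)
    · intro u
      fin_cases u <;> (rw [dNf_coe hδ0.le hδ1 hF0]; norm_num [dRf, ct, vidx, inA, Fin.add_def]; try ring)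
    · intro u v
      fin_cases u <;> fin_cases v <;>
        (rw [dNf_coe hδ0.le hδ1 hF0]; norm_num [dRf, ct, vidx, inA, Fin.add_def] <;> linarith)
    · intro u y hy
      have h3 : y.val < 3 := by
        by_contra h
        refine hy ⟨y.val - 3, by omega⟩ (Fin.ext ?_)
        show y.val = y.val - 3 + 3
        omega
      have hinA : inA (.inl (⟨u.val + 3, by omega⟩ : Fin 6)) ≠ inA (.inr y) := by
        simp only [inA, ne_eq, decide_eq_decide]
        intro hiff
        have := hiff.mpr h3
        omega
      have hge := dRf_cross hδ0.le hδ1 hF0 _ _ hinA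
      rw [dNf_coe hδ0.le hδ1 hF0]
      calc (10:ℝ) = (1-lam)*F := hFeq.symm
        _ ≤ (1-lam) * dRf del F (.inl (⟨u.val + 3, by omega⟩ : Fin 6)) (.inr y) :=
            mul_le_mul_of_nonneg_left hge hβ0.le
    · intro u v hu hv
      obtain ⟨a, ha⟩ := hu
      obtain ⟨b, hb⟩ := hv
      refine Finset.card_le_one.mp hcard' _ ?_ _ ?_
      · exact Finset.mem_filter.mpr ⟨Finset.mem_univ _, by rw [ha]; simp⟩
      · exact Finset.mem_filter.mpr ⟨Finset.mem_univ _, by rw [hb]; simp⟩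
end

section
/- For every semi-centroid clustering instance with arbitrary nonnegative loss functions ℓ_i, there exists a clustering that is 1-FJR. -/
/-!
Greedy capture. Let `θ = n / k`. Among all pairs `(S, y)` with `|S| ≥ θ`, pick one minimising
the largest loss `max_{i ∈ S} ℓ_i(S, y)`, make it a cluster, remove `S` and repeat; once fewer
than `θ` agents remain they form the last cluster. Every cluster but the last has at least `θ`
agents and the last one is nonempty, so there are at most `k` clusters. If `(S, y)` were a
blocking coalition, look at the first cluster `(S₀, y₀)` meeting `S`: when it was picked, all
of `S` was still present, so `(S, y)` competed with it, and an agent `j ∈ S ∩ S₀` has loss at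
most `max_{i ∈ S} ℓ_i(S, y)`, contradicting that every `i ∈ S` strictly prefers `(S, y)` to
`j`'s cluster.
-/

open Finset

open Function

theorem exists_minimax {α β γ : Type*} [LinearOrder γ] {C : Finset α} (hC : C.Nonempty)
    (A : α → Finset β) (hA : ∀ c ∈ C, (A c).Nonempty) (f : α → β → γ) :
    ∃ c₀ ∈ C, ∀ c ∈ C, ∃ b ∈ A c, ∀ b₀ ∈ A c₀, f c₀ b₀ ≤ f c b := by
  have : Nonempty β := let ⟨c, hc⟩ := hC; let ⟨b, _⟩ := hA c hc; ⟨b⟩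
  choose! worst hworst_mem hworst_max using fun c hc => (A c).exists_max_image (f c) (hA c hc)
  obtain ⟨c₀, hc₀, hmin⟩ := C.exists_min_image (fun c => f c (worst c)) hC
  exact ⟨c₀, hc₀, fun c hc => ⟨worst c, hworst_mem c hc,
    fun b₀ hb₀ => (hworst_max c₀ hc₀ b₀ hb₀).trans (hmin c hc)⟩⟩

namespace Clustering

variable {N M : Type*} {k : ℕ}

theorem idx_eq_of_mem (X : Clustering N M k) {i : N} {t : Fin k} (hi : i ∈ X.part t) :
    X.idx i = t :=
  (X.partition i).unique (X.partition i).exists.choose_spec hi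

theorem loss_eq_of_mem (X : Clustering N M k) (l : N → Finset N → M → ℝ) {i : N} {t : Fin k}
    (hi : i ∈ X.part t) : X.loss l i = l i (X.part t) (X.cent t) := by
  rw [loss, X.idx_eq_of_mem hi]

theorem exists_of_list [Nonempty M] (L : List (Finset N × M)) (hlen : L.length ≤ k)
    (hcover : ∀ i, ∃ p ∈ L, i ∈ p.1) (hdisj : L.Pairwise (Disjoint on Prod.fst)) :
    ∃ X : Clustering N M k, ∀ p ∈ L, ∃ t, X.part t = p.1 ∧ X.cent t = p.2 := by
  let cluster (t : Fin k) : Finset N × M := L.getD t (∅, Classical.arbitrary M)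
  have cluster_eq (t : Fin k) (ht : (t : ℕ) < L.length) : cluster t = L[(t : ℕ)] :=
    List.getD_eq_getElem _ _ ht
  have index_unique {i : N} {s t : ℕ} (hs : s < L.length) (ht : t < L.length)
      (his : i ∈ L[s].1) (hit : i ∈ L[t].1) : s = t := by
    by_contra hst
    rcases Nat.lt_or_gt_of_ne hst with h | h
    · exact disjoint_left.mp (List.pairwise_iff_getElem.mp hdisj s t hs ht h) his hit
    · exact disjoint_left.mp (List.pairwise_iff_getElem.mp hdisj t s ht hs h) hit his
  have partition (i : N) : ∃! t, i ∈ (cluster t).1 := by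
    obtain ⟨p, hp, hip⟩ := hcover i
    obtain ⟨t, ht, rfl⟩ := List.mem_iff_getElem.mp hp
    let t' : Fin k := ⟨t, ht.trans_le hlen⟩
    refine ⟨t', by show i ∈ (cluster t').1; rwa [cluster_eq t' ht],
      fun s (his : i ∈ (cluster s).1) => ?_⟩
    by_cases hs : (s : ℕ) < L.length
    · rw [cluster_eq s hs] at his
      exact Fin.ext (index_unique hs ht his hip)
    · have hempty : cluster s = (∅, _) := List.getD_eq_default _ _ (not_lt.mp hs)
      simp [hempty] at his
  refine ⟨⟨fun t => (cluster t).1, fun t => (cluster t).2, partition⟩, fun p hp => ?_⟩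
  obtain ⟨t, ht, rfl⟩ := List.mem_iff_getElem.mp hp
  let t' : Fin k := ⟨t, ht.trans_le hlen⟩
  exact ⟨t', congrArg Prod.fst (cluster_eq t' ht), congrArg Prod.snd (cluster_eq t' ht)⟩

end Clustering

section GreedyCapture

variable {N M : Type*} {l : N → Finset N → M → ℝ} {θ : ℝ} {R : Finset N}
  {L : List (Finset N × M)}

/-- What greedy capture with threshold `θ` produces on the agents `R`, clusters listed in the
order in which they are picked. -/
structure IsGreedyCapture (l : N → Finset N → M → ℝ) (θ : ℝ) (R : Finset N)
    (L : List (Finset N × M)) : Prop where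
  mem_iff : ∀ i, i ∈ R ↔ ∃ p ∈ L, i ∈ p.1
  pairwise_disjoint : L.Pairwise (Disjoint on Prod.fst)
  length_lt : θ * L.length < R.card + θ
  exists_le : ∀ S ⊆ R, θ ≤ S.card → ∀ y,
    ∃ p ∈ L, ∃ j ∈ p.1, j ∈ S ∧ ∃ i ∈ S, l j p.1 p.2 ≤ l i S y

theorem nonempty_of_le_card (hθ : 0 < θ) {S : Finset N} (hS : θ ≤ S.card) : S.Nonempty :=
  card_pos.mp (by exact_mod_cast hθ.trans_le hS)

theorem exists_isGreedyCapture_of_card_lt [Nonempty M] (hθ : 0 < θ) (hR : (R.card : ℝ) < θ) :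
    ∃ L, IsGreedyCapture l θ R L := by
  have no_coalition (S) (hS : S ⊆ R) (hθS : θ ≤ (S.card : ℝ)) : False :=
    ((hθS.trans (by exact_mod_cast card_le_card hS)).trans_lt hR).false
  rcases R.eq_empty_or_nonempty with rfl | hne
  · exact ⟨[], ⟨by simp, .nil, by simpa using hθ,
      fun S hS hθS => (no_coalition S hS hθS).elim⟩⟩
  refine ⟨[(R, Classical.arbitrary M)], ⟨by simp, List.pairwise_singleton _ _, ?_,
    fun S hS hθS => (no_coalition S hS hθS).elim⟩⟩
  have : (0 : ℝ) < R.card := by exact_mod_cast hne.card_pos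
  simp only [List.length_singleton, Nat.cast_one, mul_one]
  linarith

theorem IsGreedyCapture.cons [DecidableEq N] {S₀ : Finset N} {y₀ : M} (hS₀R : S₀ ⊆ R)
    (hθS₀ : θ ≤ S₀.card)
    (hmin : ∀ S ⊆ R, θ ≤ S.card → ∀ y, ∃ i ∈ S, ∀ j ∈ S₀, l j S₀ y₀ ≤ l i S y)
    (hL : IsGreedyCapture l θ (R \ S₀) L) : IsGreedyCapture l θ R ((S₀, y₀) :: L) where
  mem_iff i := by
    by_cases hi : i ∈ S₀
    · simp [hi, hS₀R hi]
    · simp [hi, ← hL.mem_iff]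
  pairwise_disjoint := List.pairwise_cons.mpr
    ⟨fun q hq => disjoint_left.mpr fun i hi₀ hiq =>
      (mem_sdiff.mp ((hL.mem_iff i).mpr ⟨q, hq, hiq⟩)).2 hi₀, hL.pairwise_disjoint⟩
  length_lt := by
    have hcard : ((R \ S₀).card : ℝ) = R.card - S₀.card := by
      rw [card_sdiff_of_subset hS₀R, Nat.cast_sub (card_le_card hS₀R)]
    have := hL.length_lt
    simp only [List.length_cons, Nat.cast_succ]
    linarith
  exists_le S hSR hθS y := by
    by_cases hdisj : Disjoint S₀ S
    · obtain ⟨p, hp, rest⟩ := hL.exists_le S (subset_sdiff.mpr ⟨hSR, hdisj.symm⟩) hθS y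
      exact ⟨p, List.mem_cons_of_mem _ hp, rest⟩
    · obtain ⟨j, hj₀, hjS⟩ := not_disjoint_iff.mp hdisj
      obtain ⟨i, hiS, hle⟩ := hmin S hSR hθS y
      exact ⟨(S₀, y₀), List.mem_cons_self, j, hj₀, hjS, i, hiS, hle j hj₀⟩

theorem exists_isGreedyCapture [Fintype M] [Nonempty M] (hθ : 0 < θ) (R : Finset N) :
    ∃ L, IsGreedyCapture l θ R L := by
  classical
  induction R using Finset.strongInduction with
  | H R ih =>
  by_cases hsmall : (R.card : ℝ) < θ
  · exact exists_isGreedyCapture_of_card_lt hθ hsmall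
  · let C := (R.powerset ×ˢ (univ : Finset M)).filter fun p => θ ≤ p.1.card
    have mem_C {S : Finset N} {y : M} : (S, y) ∈ C ↔ S ⊆ R ∧ θ ≤ S.card := by simp [C]
    obtain ⟨⟨S₀, y₀⟩, h₀, hmin⟩ :=
      exists_minimax ⟨(R, Classical.arbitrary M), mem_C.mpr ⟨subset_rfl, not_lt.mp hsmall⟩⟩
      Prod.fst (fun p hp => nonempty_of_le_card hθ (mem_filter.mp hp).2) fun p i => l i p.1 p.2
    obtain ⟨hS₀R, hθS₀⟩ := mem_C.mp h₀
    obtain ⟨L, hL⟩ := ih _ (sdiff_ssubset hS₀R (nonempty_of_le_card hθ hθS₀))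
    exact ⟨_, hL.cons hS₀R hθS₀ fun S hSR hθS y => hmin (S, y) (mem_C.mpr ⟨hSR, hθS⟩)⟩

end GreedyCapture

theorem exists_one_FJR_general {N M : Type*} [Fintype N] [Nonempty N] [Fintype M] [Nonempty M]
    {k : ℕ} (hk : 1 ≤ k)
    (l : N → Finset N → M → ℝ) :
    ∃ X : Clustering N M k, IsFJR X l 1 := by
  have hk₀ : (0 : ℝ) < k := by exact_mod_cast hk
  set θ : ℝ := Fintype.card N / k
  have hθ : 0 < θ := div_pos (by exact_mod_cast Fintype.card_pos) hk₀
  obtain ⟨L, hL⟩ := exists_isGreedyCapture (l := l) hθ univ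
  have hlen : L.length ≤ k := by
    have hθk : (Fintype.card N : ℝ) = θ * k := (div_mul_cancel₀ _ hk₀.ne').symm
    have := hL.length_lt
    rw [card_univ, hθk, ← mul_add_one] at this
    have hlt : (L.length : ℝ) < k + 1 := lt_of_mul_lt_mul_left this hθ.le
    exact Nat.lt_succ_iff.mp (by exact_mod_cast hlt)
  obtain ⟨X, hX⟩ := Clustering.exists_of_list L hlen (fun i => (hL.mem_iff i).mp (mem_univ i))
    hL.pairwise_disjoint
  refine ⟨X, fun ⟨S, y, hS, hblock⟩ => ?_⟩
  obtain ⟨p, hp, j, hjp, hjS, i, hiS, hle⟩ := hL.exists_le S (subset_univ S) hS y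
  obtain ⟨t, hpart, hcent⟩ := hX p hp
  have hlt := hblock i hiS j hjS
  rw [one_mul, X.loss_eq_of_mem l (hpart ▸ hjp), hpart, hcent] at hlt
  exact hlt.not_ge hle

/-- For every semi-centroid clustering instance with arbitrary nonnegative loss functions,
there exists a clustering that is `1`-FJR. -/
theorem exists_one_FJR {N M : Type*} [Fintype N] [Nonempty N] [Fintype M] [Nonempty M]
    {k : ℕ} (hk : 1 ≤ k)
    (l : N → Finset N → M → ℝ) (hl : ∀ i C x, 0 ≤ l i C x) :
    ∃ X : Clustering N M k, IsFJR X l 1 :=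
  exists_one_FJR_general hk l
end

section
/- For every finite set N of n agents, nonempty finite set M of feasible centers, pseudometric d on the disjoint union N ⊔ M, and integer k ≥ 1, there exists a single clustering that is simultaneously 5-FJR with respect to the centroid loss ℓ^c_i(C,x) = d(i,x) and 2-FJR with respect to the non-centroid loss ℓ^m_i(C,x) = max_{j∈C} d(i,j). -/
open Finset

set_option linter.unusedSectionVars false
set_option linter.deprecated false

namespace GCCaux

variable {N M : Type*} [Fintype N] [DecidableEq N] [Fintype M] [Nonempty M]
variable (d : N ⊕ M → N ⊕ M → NNReal) (m : ℕ)

noncomputable def gccDiam (S : Finset N) : NNReal :=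
  S.sup fun a => S.sup fun b => d (Sum.inl a) (Sum.inl b)

noncomputable def gccRad (S : Finset N) (y : M) : NNReal :=
  S.sup fun a => d (Sum.inl a) (Sum.inr y)

lemma le_gccDiam {S : Finset N} {a b : N} (ha : a ∈ S) (hb : b ∈ S) :
    d (Sum.inl a) (Sum.inl b) ≤ gccDiam d S :=
  le_trans (Finset.le_sup (f := fun b => d (Sum.inl a) (Sum.inl b)) hb)
    (Finset.le_sup (f := fun a => S.sup fun b => d (Sum.inl a) (Sum.inl b)) ha)

lemma gccDiam_le {S : Finset N} {c : NNReal}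
    (h : ∀ a ∈ S, ∀ b ∈ S, d (Sum.inl a) (Sum.inl b) ≤ c) : gccDiam d S ≤ c :=
  Finset.sup_le fun a ha => Finset.sup_le fun b hb => h a ha b hb

lemma gccDiam_mono {S T : Finset N} (h : S ⊆ T) : gccDiam d S ≤ gccDiam d T :=
  gccDiam_le d fun a ha b hb => le_gccDiam d (h ha) (h hb)

lemma le_gccRad {S : Finset N} {a : N} {y : M} (ha : a ∈ S) :
    d (Sum.inl a) (Sum.inr y) ≤ gccRad d S y :=
  Finset.le_sup (f := fun a => d (Sum.inl a) (Sum.inr y)) ha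

lemma gccRad_le {S : Finset N} {y : M} {c : NNReal}
    (h : ∀ a ∈ S, d (Sum.inl a) (Sum.inr y) ≤ c) : gccRad d S y ≤ c :=
  Finset.sup_le h

lemma exists_step (R : Finset N) : ∃ S : Finset N, S ⊆ R ∧ S.card = min m R.card ∧
    ∀ S' : Finset N, S' ⊆ R → S'.card = min m R.card → gccDiam d S ≤ gccDiam d S' := by
  obtain ⟨T, hTR, hTc⟩ := R.exists_subset_card_eq (min_le_right m _)
  have hne : (R.powerset.filter fun S => S.card = min m R.card).Nonempty :=
    ⟨T, by simp [Finset.mem_filter, Finset.mem_powerset, hTR, hTc]⟩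
  obtain ⟨S, hS, hmin⟩ := Finset.exists_min_image _ (gccDiam d) hne
  simp only [Finset.mem_filter, Finset.mem_powerset] at hS
  exact ⟨S, hS.1, hS.2, fun S' h1 h2 =>
    hmin S' (by simp [Finset.mem_filter, Finset.mem_powerset, h1, h2])⟩

noncomputable def stepS (R : Finset N) : Finset N := (exists_step d m R).choose

lemma stepS_subset (R : Finset N) : stepS d m R ⊆ R := (exists_step d m R).choose_spec.1

lemma stepS_card (R : Finset N) : (stepS d m R).card = min m R.card :=
  (exists_step d m R).choose_spec.2.1

lemma stepS_min (R : Finset N) : ∀ S' : Finset N, S' ⊆ R → S'.card = min m R.card →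
    gccDiam d (stepS d m R) ≤ gccDiam d S' :=
  (exists_step d m R).choose_spec.2.2

noncomputable def stepY (S : Finset N) : M :=
  (Finset.exists_min_image Finset.univ (gccRad d S) Finset.univ_nonempty).choose

lemma stepY_min (S : Finset N) (y : M) : gccRad d S (stepY d S) ≤ gccRad d S y :=
  (Finset.exists_min_image Finset.univ (gccRad d S) Finset.univ_nonempty).choose_spec.2
    y (Finset.mem_univ y)

noncomputable def Rseq : ℕ → Finset N
  | 0 => Finset.univ
  | t + 1 => Rseq t \ stepS d m (Rseq t)

lemma Rseq_anti {t t' : ℕ} (h : t ≤ t') : Rseq d m t' ⊆ Rseq d m t := by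
  induction t' with
  | zero => simp_all
  | succ s ih =>
    rcases Nat.lt_or_ge t (s+1) with h' | h'
    · have hstep : Rseq d m (s+1) ⊆ Rseq d m s := by
        rw [Rseq]; exact Finset.sdiff_subset
      exact hstep.trans (ih (Nat.lt_succ_iff.mp h'))
    · have : t = s + 1 := le_antisymm h h'
      subst this; exact Finset.Subset.refl _

lemma Rseq_card_le (t : ℕ) : (Rseq d m t).card ≤ Fintype.card N - t * m := by
  induction t with
  | zero => simp [Rseq]
  | succ s ih =>
    have hsub := stepS_subset d m (Rseq d m s)
    have hc : (Rseq d m (s+1)).card = (Rseq d m s).card - (stepS d m (Rseq d m s)).card :=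
      Finset.card_sdiff_of_subset hsub
    rw [stepS_card] at hc
    rw [Nat.succ_mul]
    omega

lemma mem_stepS_not_mem_later {i : N} {t t' : ℕ} (h : i ∈ stepS d m (Rseq d m t))
    (hlt : t < t') : i ∉ Rseq d m t' := by
  intro hmem
  have h1 : i ∈ Rseq d m (t+1) := Rseq_anti d m hlt hmem
  simp only [Rseq, Finset.mem_sdiff] at h1
  exact h1.2 h

lemma exists_capture {k : ℕ} (hmn : Fintype.card N ≤ k * m) (i : N) :
    ∃ t, t < k ∧ i ∈ stepS d m (Rseq d m t) := by
  have hk0 : i ∉ Rseq d m k := by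
    have := Rseq_card_le d m (t := k)
    have hz : (Rseq d m k).card = 0 := by omega
    simp [Finset.card_eq_zero.mp hz]
  have key : ∀ T : ℕ, i ∉ Rseq d m T → ∃ t, t < T ∧ i ∈ stepS d m (Rseq d m t) := by
    intro T
    induction T with
    | zero => intro h; exact absurd (Finset.mem_univ i) h
    | succ s ih =>
      intro h
      by_cases hs : i ∈ Rseq d m s
      · refine ⟨s, Nat.lt_succ_self s, ?_⟩
        by_contra hns
        exact h (by simp only [Rseq, Finset.mem_sdiff]; exact ⟨hs, hns⟩)
      · obtain ⟨t, ht, hts⟩ := ih hs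
        exact ⟨t, ht.trans (Nat.lt_succ_self s), hts⟩
  exact key k hk0

lemma stepS_unique {i : N} {a b : ℕ} (ha : i ∈ stepS d m (Rseq d m a))
    (hb : i ∈ stepS d m (Rseq d m b)) : a = b := by
  rcases lt_trichotomy a b with h | h | h
  · exact absurd (stepS_subset d m _ hb) (mem_stepS_not_mem_later d m ha h)
  · exact h
  · exact absurd (stepS_subset d m _ ha) (mem_stepS_not_mem_later d m hb h)

end GCCaux

/-- For every instance with a single pseudometric `d` on `N ⊔ M`, there exists a clustering
that is simultaneously `5`-FJR with respect to the centroid loss and `2`-FJR with respect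
to the non-centroid loss (both induced by `d`). -/
theorem exists_simultaneous_FJR_single_metric {N M : Type*} [Fintype N] [Nonempty N]
    [Fintype M] [Nonempty M] {k : ℕ} (hk : 1 ≤ k)
    (d : N ⊕ M → N ⊕ M → NNReal) (hd : IsPseudometric d) :
    ∃ X : Clustering N M k,
      IsFJR X (fun i _C x => ((d (Sum.inl i) (Sum.inr x) : NNReal) : ℝ)) 5 ∧
      IsFJR X (fun i C _x => ((C.sup fun j => d (Sum.inl i) (Sum.inl j) : NNReal) : ℝ)) 2 := by
  classical
  obtain ⟨hd0, hdsymm, hdtri⟩ := hd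
  have hn0 : 0 < Fintype.card N := Fintype.card_pos
  have hk0 : (0:ℝ) < (k:ℝ) := by exact_mod_cast hk
  set n := Fintype.card N with hn
  set m := ⌈(n:ℝ)/(k:ℝ)⌉₊ with hmdef
  have hm1 : 1 ≤ m := Nat.ceil_pos.mpr (div_pos (by exact_mod_cast hn0) hk0)
  have hmn : n ≤ k * m := by
    have h1 : (n:ℝ)/(k:ℝ) ≤ (m:ℝ) := Nat.le_ceil _
    rw [div_le_iff₀ hk0] at h1
    have h2 : (n:ℝ) ≤ (k:ℝ) * (m:ℝ) := by linarith
    exact_mod_cast h2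
  have hpartition : ∀ i : N, ∃! t : Fin k, i ∈ GCCaux.stepS d m (GCCaux.Rseq d m (t:ℕ)) := by
    intro i
    obtain ⟨t, htk, hts⟩ := GCCaux.exists_capture d m hmn i
    exact ⟨⟨t, htk⟩, hts, fun t' ht' => Fin.ext (GCCaux.stepS_unique d m ht' hts)⟩
  set X : Clustering N M k :=
    ⟨fun t => GCCaux.stepS d m (GCCaux.Rseq d m (t:ℕ)),
     fun t => GCCaux.stepY d (GCCaux.stepS d m (GCCaux.Rseq d m (t:ℕ))), hpartition⟩ with hX
  have hmem : ∀ i, i ∈ X.part (X.idx i) := fun i => (X.partition i).exists.choose_spec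
  have hmS : ∀ S : Finset N, (n:ℝ)/(k:ℝ) ≤ (S.card:ℝ) → m ≤ S.card := fun S h =>
    Nat.ceil_le.mpr h
  have key : ∀ S : Finset N, m ≤ S.card →
      ∃ j ∈ S, S ⊆ GCCaux.Rseq d m (X.idx j : ℕ) ∧
        GCCaux.gccDiam d (X.part (X.idx j)) ≤ GCCaux.gccDiam d S := by
    intro S hmcard
    have hSne : S.Nonempty := Finset.card_pos.mp (lt_of_lt_of_le hm1 hmcard)
    obtain ⟨j, hjS, hjmin⟩ := Finset.exists_min_image S (fun i => X.idx i) hSne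
    have hsub : S ⊆ GCCaux.Rseq d m (X.idx j : ℕ) := by
      intro i hi
      have h1 : i ∈ GCCaux.stepS d m (GCCaux.Rseq d m (X.idx i : ℕ)) := hmem i
      have h2 : i ∈ GCCaux.Rseq d m (X.idx i : ℕ) := GCCaux.stepS_subset d m _ h1
      exact GCCaux.Rseq_anti d m (hjmin i hi) h2
    refine ⟨j, hjS, hsub, ?_⟩
    obtain ⟨S', hS'S, hS'c⟩ := S.exists_subset_card_eq hmcard
    have hcardR : m ≤ (GCCaux.Rseq d m (X.idx j : ℕ)).card :=
      le_trans hmcard (Finset.card_le_card hsub)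
    have hminEq : min m (GCCaux.Rseq d m (X.idx j : ℕ)).card = m := min_eq_left hcardR
    have h1 : GCCaux.gccDiam d (X.part (X.idx j)) ≤ GCCaux.gccDiam d S' :=
      GCCaux.stepS_min d m _ S' (hS'S.trans hsub) (by rw [hminEq, hS'c])
    exact h1.trans (GCCaux.gccDiam_mono d hS'S)
  refine ⟨X, ?_, ?_⟩
  · -- centroid 5-FJR
    rintro ⟨S, y, hcard, hdev⟩
    obtain ⟨j, hjS, hsub, hdiam⟩ := key S (hmS S hcard)
    have hSne : S.Nonempty := ⟨j, hjS⟩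
    obtain ⟨i0, hi0S, hi0max⟩ :=
      Finset.exists_max_image S (fun a => d (Sum.inl a) (Sum.inr y)) hSne
    set r : NNReal := d (Sum.inl i0) (Sum.inr y) with hr
    have hdiamS : GCCaux.gccDiam d S ≤ r + r := by
      refine GCCaux.gccDiam_le d fun a ha b hb => ?_
      refine (hdtri (Sum.inl a) (Sum.inl b) (Sum.inr y)).trans ?_
      refine add_le_add (hi0max a ha) ?_
      rw [hdsymm]; exact hi0max b hb
    have hloss : d (Sum.inl j) (Sum.inr (X.cent (X.idx j))) ≤ r + r + r := by
      have h1 : d (Sum.inl j) (Sum.inr (X.cent (X.idx j))) ≤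
          GCCaux.gccRad d (X.part (X.idx j)) (X.cent (X.idx j)) :=
        GCCaux.le_gccRad d (hmem j)
      have h2 : GCCaux.gccRad d (X.part (X.idx j)) (X.cent (X.idx j)) ≤
          GCCaux.gccRad d (X.part (X.idx j)) y := GCCaux.stepY_min d _ y
      have h3 : GCCaux.gccRad d (X.part (X.idx j)) y ≤
          GCCaux.gccDiam d (X.part (X.idx j)) + r := by
        refine GCCaux.gccRad_le d fun a ha => ?_
        refine (hdtri (Sum.inl a) (Sum.inr y) (Sum.inl j)).trans ?_
        exact add_le_add (GCCaux.le_gccDiam d ha (hmem j)) (hi0max j hjS)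
      have h4 : GCCaux.gccDiam d (X.part (X.idx j)) + r ≤ (r + r) + r :=
        add_le_add_left (hdiam.trans hdiamS) r
      exact h1.trans (h2.trans (h3.trans h4))
    have hdev' := hdev i0 hi0S j hjS
    have hlossdef : X.loss (fun i _C x => ((d (Sum.inl i) (Sum.inr x) : NNReal) : ℝ)) j
        = ((d (Sum.inl j) (Sum.inr (X.cent (X.idx j))) : NNReal) : ℝ) := rfl
    rw [hlossdef] at hdev'
    have hlossR : ((d (Sum.inl j) (Sum.inr (X.cent (X.idx j))) : NNReal) : ℝ)
        ≤ (r:ℝ) + (r:ℝ) + (r:ℝ) := by exact_mod_cast hloss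
    have hr0 : (0:ℝ) ≤ (r:ℝ) := r.coe_nonneg
    simp only at hdev'
    linarith
  · -- non-centroid 2-FJR
    rintro ⟨S, y, hcard, hdev⟩
    obtain ⟨j, hjS, hsub, hdiam⟩ := key S (hmS S hcard)
    set L : NNReal := S.sup fun b => d (Sum.inl j) (Sum.inl b) with hL
    have h1 : ((X.part (X.idx j)).sup fun b => d (Sum.inl j) (Sum.inl b)) ≤
        GCCaux.gccDiam d (X.part (X.idx j)) :=
      Finset.sup_le fun b hb => GCCaux.le_gccDiam d (hmem j) hb
    have h2 : GCCaux.gccDiam d S ≤ L + L := by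
      refine GCCaux.gccDiam_le d fun a ha b hb => ?_
      refine (hdtri (Sum.inl a) (Sum.inl b) (Sum.inl j)).trans ?_
      refine add_le_add ?_ ?_
      · rw [hdsymm]
        exact Finset.le_sup (f := fun b => d (Sum.inl j) (Sum.inl b)) ha
      · exact Finset.le_sup (f := fun b => d (Sum.inl j) (Sum.inl b)) hb
    have hloss : ((X.part (X.idx j)).sup fun b => d (Sum.inl j) (Sum.inl b)) ≤ L + L :=
      h1.trans (hdiam.trans h2)
    have hdev' := hdev j hjS j hjS
    have hlossdef : X.loss
        (fun i C _x => ((C.sup fun j' => d (Sum.inl i) (Sum.inl j') : NNReal) : ℝ)) j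
        = (((X.part (X.idx j)).sup fun b => d (Sum.inl j) (Sum.inl b) : NNReal) : ℝ) := rfl
    rw [hlossdef] at hdev'
    have hlossR : (((X.part (X.idx j)).sup fun b => d (Sum.inl j) (Sum.inl b) : NNReal) : ℝ)
        ≤ (L:ℝ) + (L:ℝ) := by exact_mod_cast hloss
    have hL0 : (0:ℝ) ≤ (L:ℝ) := L.coe_nonneg
    simp only at hdev'
    linarith
end

section
/- For every λ ∈ (0,1] and every real α with 1 ≤ α < 1/√λ, there exists a semi-centroid clustering instance equipped with the weighted single metric loss with parameter λ, in which k divides n, such that no balanced clustering (one in which every cluster has exactly n/k members) is in the α-core. -/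
open Finset

-- scratch: auxiliary part to append before theorem
noncomputable section

/-- Location of each point: agent `i` lives at location `i`; candidate `j` at `j+1`. -/
def bclbLoc : Fin 4 ⊕ Fin 3 → Fin 4 := Sum.elim id Fin.succ

/-- Two-scale pseudometric: colocated points at distance 0; location 0 (the outlier)
at distance `R` from everything else; distinct non-outlier locations at distance 1. -/
def bclbD (R : NNReal) (u v : Fin 4 ⊕ Fin 3) : NNReal :=
  if bclbLoc u = bclbLoc v then 0 else if bclbLoc u = 0 ∨ bclbLoc v = 0 then R else 1

lemma bclbD_eq_zero {R : NNReal} {u v : Fin 4 ⊕ Fin 3} (h : bclbLoc u = bclbLoc v) :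
    bclbD R u v = 0 := if_pos h

lemma bclbD_eq_one {R : NNReal} {u v : Fin 4 ⊕ Fin 3} (h : bclbLoc u ≠ bclbLoc v)
    (h0u : bclbLoc u ≠ 0) (h0v : bclbLoc v ≠ 0) : bclbD R u v = 1 := by
  rw [bclbD, if_neg h, if_neg (by tauto)]

lemma bclbD_eq_R {R : NNReal} {u v : Fin 4 ⊕ Fin 3} (h : bclbLoc u ≠ bclbLoc v)
    (h0 : bclbLoc u = 0 ∨ bclbLoc v = 0) : bclbD R u v = R := by
  rw [bclbD, if_neg h, if_pos h0]

lemma bclbD_one_le {R : NNReal} (hR : 1 ≤ R) {u v : Fin 4 ⊕ Fin 3}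
    (h : bclbLoc u ≠ bclbLoc v) : 1 ≤ bclbD R u v := by
  rw [bclbD, if_neg h]
  split_ifs <;> simp [hR]

lemma bclbD_pseudo {R : NNReal} (hR : 1 ≤ R) : IsPseudometric (bclbD R) := by
  refine ⟨fun x => bclbD_eq_zero rfl, fun x y => ?_, fun x y z => ?_⟩
  · unfold bclbD
    by_cases h : bclbLoc x = bclbLoc y
    · rw [if_pos h, if_pos h.symm]
    · rw [if_neg h, if_neg (Ne.symm h)]
      by_cases h0 : bclbLoc x = 0 ∨ bclbLoc y = 0
      · rw [if_pos h0, if_pos (Or.symm h0)]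
      · rw [if_neg h0, if_neg (by tauto)]
  · by_cases hxy : bclbLoc x = bclbLoc y
    · rw [bclbD_eq_zero hxy]; exact zero_le
    · by_cases hxz : bclbLoc x = bclbLoc z
      · have : bclbD R z y = bclbD R x y := by unfold bclbD; rw [← hxz]
        rw [bclbD_eq_zero hxz, this, zero_add]
      · by_cases hzy : bclbLoc z = bclbLoc y
        · have : bclbD R x z = bclbD R x y := by unfold bclbD; rw [hzy]
          rw [bclbD_eq_zero hzy, this, add_zero]
        · by_cases h0 : bclbLoc x = 0 ∨ bclbLoc y = 0
          · rw [bclbD_eq_R hxy h0]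
            rcases h0 with h0 | h0
            · rw [bclbD_eq_R hxz (Or.inl h0)]; exact le_self_add
            · rw [bclbD_eq_R hzy (Or.inr h0)]; exact le_add_self
          · rw [bclbD_eq_one hxy (by tauto) (by tauto)]
            calc (1 : NNReal) ≤ bclbD R x z := bclbD_one_le hR hxz
            _ ≤ bclbD R x z + bclbD R z y := le_self_add

/-- Pick an element of `{1,2,3} : Fin 4` different from both arguments. -/
def bclbPick (z w : Fin 4) : Fin 4 :=
  if z ≠ 1 ∧ w ≠ 1 then 1 else if z ≠ 2 ∧ w ≠ 2 then 2 else 3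

lemma bclbPick_spec (z w : Fin 4) :
    bclbPick z w ≠ 0 ∧ bclbPick z w ≠ z ∧ bclbPick z w ≠ w := by revert z w; decide

lemma sup_pair {α β : Type*} [DecidableEq α] [SemilatticeSup β] [OrderBot β]
    (a b : α) (f : α → β) : ({a, b} : Finset α).sup f = f a ⊔ f b := by
  rw [Finset.sup_insert, Finset.sup_singleton]

end


/-- Balanced-clustering lower bound for the weighted single metric loss: for `λ ∈ (0,1]`
and `1 ≤ α < 1/√λ`, there is an instance in which `k` divides `n` and no balanced
clustering (every cluster of size exactly `n/k`) is in the `α`-core. -/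
theorem balanced_core_lower_bound_weighted (lam : ℝ) (hlam0 : 0 < lam) (hlam1 : lam ≤ 1)
    (α : ℝ) (hα : 1 ≤ α) (hub : α < 1 / Real.sqrt lam) :
    ∃ (n m k : ℕ) (d : Fin n ⊕ Fin m → Fin n ⊕ Fin m → NNReal),
      1 ≤ n ∧ 1 ≤ m ∧ 1 ≤ k ∧ k ∣ n ∧ IsPseudometric d ∧
      ∀ X : Clustering (Fin n) (Fin m) k,
        (∀ t : Fin k, (X.part t).card = n / k) → ¬ InCore X (wLoss d lam) α := by
  classical
  have hs0 : 0 < Real.sqrt lam := Real.sqrt_pos.mpr hlam0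
  have hs1 : Real.sqrt lam ≤ 1 := by
    nlinarith [Real.sq_sqrt hlam0.le, Real.sqrt_nonneg lam]
  have hαs : α * Real.sqrt lam < 1 := by
    rw [lt_div_iff₀ hs0] at hub; exact hub
  have hαlam : α * lam < 1 := by
    nlinarith [Real.sq_sqrt hlam0.le, Real.sqrt_nonneg lam]
  set Rr : ℝ := (α + 1) / lam with hRr
  have hRr2 : 2 ≤ Rr := by
    rw [hRr, le_div_iff₀ hlam0]; nlinarith
  set R : NNReal := Real.toNNReal Rr with hRdef
  have hRcoe : (R : ℝ) = Rr := Real.coe_toNNReal _ (by linarith)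
  have hR1 : 1 ≤ R := by
    rw [← NNReal.coe_le_coe, hRcoe, NNReal.coe_one]; linarith
  refine ⟨4, 3, 2, bclbD R, by norm_num, by norm_num, by norm_num, ⟨2, rfl⟩,
    bclbD_pseudo hR1, ?_⟩
  intro X hbal hIC
  set l := wLoss (bclbD R) lam with hl
  have hidx_of_mem : ∀ (i : Fin 4) (t : Fin 2), i ∈ X.part t → X.idx i = t := fun i t h =>
    (X.partition i).unique (X.partition i).exists.choose_spec h
  set t0 := X.idx 0 with ht0
  have h0mem : (0 : Fin 4) ∈ X.part t0 := (X.partition 0).exists.choose_spec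
  have hcard0 : (X.part t0).card = 2 := by simpa using hbal t0
  obtain ⟨z, hz0, hset0⟩ : ∃ z : Fin 4, z ≠ 0 ∧ X.part t0 = {0, z} := by
    obtain ⟨a, b, hab, hset⟩ := Finset.card_eq_two.mp hcard0
    rw [hset] at h0mem
    rcases Finset.mem_insert.mp h0mem with h | h
    · rw [← h] at hset hab
      exact ⟨b, Ne.symm hab, hset⟩
    · rw [← Finset.mem_singleton.mp h] at hset hab
      exact ⟨a, hab, by rw [hset, Finset.pair_comm]⟩
  have hzmem : z ∈ X.part t0 := by
    rw [hset0]; exact Finset.mem_insert_of_mem (Finset.mem_singleton_self z)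
  have hidxz : X.idx z = t0 := hidx_of_mem z t0 hzmem
  have hne_t0 : ∀ i : Fin 4, i ≠ 0 → i ≠ z → X.idx i ≠ t0 := by
    intro i hi0 hiz h
    have hmem : i ∈ X.part t0 := h ▸ (X.partition i).exists.choose_spec
    rw [hset0] at hmem
    rcases Finset.mem_insert.mp hmem with h' | h'
    · exact hi0 h'
    · exact hiz (Finset.mem_singleton.mp h')
  obtain ⟨hw00, hw0z, -⟩ := bclbPick_spec z z
  set w0 := bclbPick z z with hw0
  set t1 := X.idx w0 with ht1
  have ht10 : t1 ≠ t0 := hne_t0 w0 hw00 hw0z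
  have hfin2 : ∀ a b c : Fin 2, a ≠ c → b ≠ c → a = b := by decide
  have hsame : ∀ i : Fin 4, i ≠ 0 → i ≠ z → X.idx i = t1 := fun i hi0 hiz =>
    hfin2 _ _ _ (hne_t0 i hi0 hiz) ht10
  set c := X.cent t1 with hc
  obtain ⟨hv0, hvz, hvc⟩ := bclbPick_spec z c.succ
  set v := bclbPick z c.succ with hv
  obtain ⟨hu0, huz, huv⟩ := bclbPick_spec z v
  set u := bclbPick z v with hu
  have hidxv : X.idx v = t1 := hsame v hv0 hvz
  have hidxu : X.idx u = t1 := hsame u hu0 huz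
  have hvmem : v ∈ X.part t1 := hidxv ▸ (X.partition v).exists.choose_spec
  have humem : u ∈ X.part t1 := hidxu ▸ (X.partition u).exists.choose_spec
  have hset1 : X.part t1 = {u, v} := by
    have hsub : ({u, v} : Finset (Fin 4)) ⊆ X.part t1 := by
      intro i hi
      rcases Finset.mem_insert.mp hi with h | h
      · exact h ▸ humem
      · exact (Finset.mem_singleton.mp h) ▸ hvmem
    have hc2 : (X.part t1).card ≤ ({u, v} : Finset (Fin 4)).card := by
      rw [hbal t1, Finset.card_insert_of_notMem (by simp [huv]), Finset.card_singleton]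
    exact (Finset.eq_of_subset_of_card_le hsub hc2).symm
  have hvval : v.val ≠ 0 := fun h => hv0 (Fin.ext (by simpa using h))
  have hvlt : v.val < 4 := v.isLt
  set y : Fin 3 := ⟨v.val - 1, by omega⟩ with hy
  have hysucc : y.succ = v := by
    apply Fin.ext
    simp only [Fin.val_succ, hy]
    omega
  -- distance evaluations
  have dvu : bclbD R (Sum.inl v) (Sum.inl u) = 1 :=
    bclbD_eq_one (fun h => huv (by simpa [bclbLoc] using h.symm))
      (fun h => hv0 (by simpa [bclbLoc] using h)) (fun h => hu0 (by simpa [bclbLoc] using h))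
  have dvv : bclbD R (Sum.inl v) (Sum.inl v) = 0 := bclbD_eq_zero rfl
  have dzz : bclbD R (Sum.inl z) (Sum.inl z) = 0 := bclbD_eq_zero rfl
  have dvz : bclbD R (Sum.inl v) (Sum.inl z) = 1 :=
    bclbD_eq_one (fun h => hvz (by simpa [bclbLoc] using h))
      (fun h => hv0 (by simpa [bclbLoc] using h)) (fun h => hz0 (by simpa [bclbLoc] using h))
  have dzv : bclbD R (Sum.inl z) (Sum.inl v) = 1 :=
    bclbD_eq_one (fun h => hvz (by simpa [bclbLoc] using h.symm))
      (fun h => hz0 (by simpa [bclbLoc] using h)) (fun h => hv0 (by simpa [bclbLoc] using h))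
  have dz0 : bclbD R (Sum.inl z) (Sum.inl 0) = R :=
    bclbD_eq_R (fun h => hz0 (by simpa [bclbLoc] using h)) (Or.inr rfl)
  have dvc : bclbD R (Sum.inl v) (Sum.inr c) = 1 :=
    bclbD_eq_one (fun h => hvc (by simpa [bclbLoc] using h))
      (fun h => hv0 (by simpa [bclbLoc] using h))
      (fun h => Fin.succ_ne_zero c (by simpa [bclbLoc] using h))
  have dvy : bclbD R (Sum.inl v) (Sum.inr y) = 0 :=
    bclbD_eq_zero (show v = y.succ from hysucc.symm)
  have hzney : z ≠ y.succ := by rw [hysucc]; exact fun h => hvz h.symm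
  have dzy : bclbD R (Sum.inl z) (Sum.inr y) = 1 :=
    bclbD_eq_one (fun h => hzney (by simpa [bclbLoc] using h))
      (fun h => hz0 (by simpa [bclbLoc] using h))
      (fun h => Fin.succ_ne_zero y (by simpa [bclbLoc] using h))
  -- loss evaluations
  have hlossv : X.loss l v = 1 := by
    rw [Clustering.loss, hidxv, hset1, hl, wLoss, sup_pair, dvu, dvv, dvc]
    norm_num
  have hdevv : l v {z, v} y = lam := by
    rw [hl, wLoss, sup_pair, dvz, dvv, dvy]
    norm_num
  have hdevz : l z {z, v} y = 1 := by
    rw [hl, wLoss, sup_pair, dzz, dzv, dzy]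
    norm_num
  have hlossz : α + 1 ≤ X.loss l z := by
    rw [Clustering.loss, hidxz, hset0, hl, wLoss, sup_pair, dz0, dzz]
    have hsup : (R ⊔ 0 : NNReal) = R := by simp
    rw [hsup, hRcoe]
    have hd : (0:ℝ) ≤ ((bclbD R (Sum.inl z) (Sum.inr (X.cent t0)) : NNReal) : ℝ) :=
      NNReal.coe_nonneg _
    have hmul : lam * Rr = α + 1 := by
      rw [hRr]; field_simp
    nlinarith [hd]
  apply hIC
  refine ⟨{z, v}, y, ?_, ?_⟩
  · have hcardS : ({z, v} : Finset (Fin 4)).card = 2 := by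
      rw [Finset.card_insert_of_notMem
        (by simp only [Finset.mem_singleton]; exact fun h => hvz h.symm),
        Finset.card_singleton]
    rw [hcardS]
    norm_num [Fintype.card_fin]
  · intro i hi
    rcases Finset.mem_insert.mp hi with rfl | hi
    · rw [hdevz]
      calc α * 1 = α := mul_one α
      _ < α + 1 := lt_add_one α
      _ ≤ X.loss l i := hlossz
    · rw [Finset.mem_singleton.mp hi, hdevv, hlossv]
      exact hαlam
end

section
/- For every semi-centroid clustering instance equipped with the weighted single metric loss with parameter λ ∈ (0,1] in which k divides n, there exists a balanced clustering (one in which every cluster has exactly n/k members) that is in the (2/λ)-core. -/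
open Finset

section Greedy

variable {N M : Type*} [Fintype N] [DecidableEq N] [Fintype M] [Nonempty M]

/-- Pick a minimizing pair `(S, y)` with `S ⊆ R`, `|S| = m`. -/
noncomputable def pick (f : Finset N × M → NNReal) (m : ℕ) (R : Finset N) :
    Finset N × M :=
  if h : ((R.powersetCard m) ×ˢ (Finset.univ : Finset M)).Nonempty then
    (Finset.exists_min_image _ f h).choose
  else (∅, Classical.arbitrary M)

lemma pick_spec (f : Finset N × M → NNReal) (m : ℕ) (R : Finset N)
    (hm : m ≤ R.card) :
    (pick f m R).1 ⊆ R ∧ (pick f m R).1.card = m ∧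
      ∀ S : Finset N, ∀ y : M, S ⊆ R → S.card = m →
        f (pick f m R) ≤ f (S, y) := by
  have hne : ((R.powersetCard m) ×ˢ (Finset.univ : Finset M)).Nonempty := by
    obtain ⟨S, hS, hSc⟩ := Finset.exists_subset_card_eq hm
    exact ⟨(S, Classical.arbitrary M), by
      simp [Finset.mem_product, Finset.mem_powersetCard, hS, hSc]⟩
  have hspec := (Finset.exists_min_image _ f hne).choose_spec
  rw [pick, dif_pos hne]
  obtain ⟨hmem, hmin⟩ := hspec
  rw [Finset.mem_product, Finset.mem_powersetCard] at hmem
  refine ⟨hmem.1.1, hmem.1.2, fun S y hSR hSc => ?_⟩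
  exact hmin (S, y) (by simp [Finset.mem_product, Finset.mem_powersetCard, hSR, hSc])

/-- Remaining agents after `t` greedy steps. -/
noncomputable def rem (f : Finset N × M → NNReal) (m : ℕ) : ℕ → Finset N
  | 0 => Finset.univ
  | t + 1 => rem f m t \ (pick f m (rem f m t)).1

lemma rem_antitone (f : Finset N × M → NNReal) (m : ℕ) {s t : ℕ} (h : s ≤ t) :
    rem f m t ⊆ rem f m s := by
  induction t with
  | zero => simp_all
  | succ t ih =>
    rcases Nat.lt_or_ge s (t+1) with hl | hg
    · exact (Finset.sdiff_subset).trans (ih (Nat.lt_succ_iff.mp hl))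
    · have : s = t + 1 := le_antisymm h hg
      subst this; exact subset_rfl

lemma rem_card (f : Finset N × M → NNReal) (m k : ℕ)
    (hn : Fintype.card N = k * m) :
    ∀ t ≤ k, (rem f m t).card = (k - t) * m := by
  intro t
  induction t with
  | zero => intro _; simp [rem, hn]
  | succ t ih =>
    intro ht
    have ht' : t ≤ k := Nat.le_of_succ_le ht
    have hc := ih ht'
    have hm : m ≤ (rem f m t).card := by
      rw [hc]
      have : 1 ≤ k - t := by omega
      calc m = 1 * m := (one_mul m).symm
        _ ≤ (k - t) * m := Nat.mul_le_mul_right m this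
    obtain ⟨hsub, hcard, -⟩ := pick_spec f m (rem f m t) hm
    show ((rem f m t) \ (pick f m (rem f m t)).1).card = (k - (t+1)) * m
    rw [Finset.card_sdiff_of_subset hsub, hcard, hc]
    have : k - (t + 1) = (k - t) - 1 := by omega
    rw [this, Nat.sub_one_mul]

lemma rem_subset_card (f : Finset N × M → NNReal) (m k : ℕ)
    (hn : Fintype.card N = k * m) {t : ℕ} (ht : t < k) :
    m ≤ (rem f m t).card := by
  rw [rem_card f m k hn t (le_of_lt ht)]
  have : 1 ≤ k - t := by omega
  calc m = 1 * m := (one_mul m).symm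
    _ ≤ (k - t) * m := Nat.mul_le_mul_right m this

lemma rem_k_empty (f : Finset N × M → NNReal) (m k : ℕ)
    (hn : Fintype.card N = k * m) : rem f m k = ∅ := by
  have := rem_card f m k hn k le_rfl
  simp at this
  exact this

lemma cover (f : Finset N × M → NNReal) (m k : ℕ)
    (hn : Fintype.card N = k * m) (i : N) :
    ∃ t, t < k ∧ i ∈ (pick f m (rem f m t)).1 := by
  have h0 : i ∈ rem f m 0 := by simp [rem]
  have hk : i ∉ rem f m k := by rw [rem_k_empty f m k hn]; exact Finset.notMem_empty i
  have hex : ∃ t, i ∉ rem f m t := ⟨k, hk⟩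
  set T := Nat.find hex with hT
  have hTspec : i ∉ rem f m T := Nat.find_spec hex
  have hT0 : T ≠ 0 := by
    intro h; rw [h] at hTspec; exact hTspec h0
  have hmem : i ∈ rem f m (T - 1) := by
    by_contra h
    exact absurd (Nat.find_min' hex h) (by omega)
  have hTk : T - 1 < k := by
    by_contra h
    push_neg at h
    have hss : rem f m (T - 1) ⊆ rem f m k := rem_antitone f m h
    rw [rem_k_empty f m k hn] at hss
    exact Finset.notMem_empty i (hss hmem)
  refine ⟨T - 1, hTk, ?_⟩
  have : i ∉ rem f m (T - 1 + 1) := by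
    have : T - 1 + 1 = T := by omega
    rw [this]; exact hTspec
  have hstep : rem f m (T - 1 + 1) = rem f m (T-1) \ (pick f m (rem f m (T-1))).1 := rfl
  rw [hstep] at this
  simp only [Finset.mem_sdiff, not_and, not_not] at this
  exact this hmem

lemma disjointness (f : Finset N × M → NNReal) (m k : ℕ)
    (hn : Fintype.card N = k * m) {s t : ℕ} (hs : s < k) (ht : t < k)
    (hst : s < t) {i : N} (his : i ∈ (pick f m (rem f m s)).1)
    (hit : i ∈ (pick f m (rem f m t)).1) : False := by
  have hsubt : (pick f m (rem f m t)).1 ⊆ rem f m t :=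
    (pick_spec f m (rem f m t) (rem_subset_card f m k hn ht)).1
  have h1 : i ∈ rem f m t := hsubt hit
  have h2 : rem f m t ⊆ rem f m (s + 1) := rem_antitone f m hst
  have h3 : i ∈ rem f m s \ (pick f m (rem f m s)).1 := h2 h1
  exact (Finset.mem_sdiff.mp h3).2 his

end Greedy

lemma wLoss_nonneg {N M : Type*} (d : N ⊕ M → N ⊕ M → NNReal) {lam : ℝ}
    (h0 : 0 ≤ lam) (h1 : lam ≤ 1) (i : N) (C : Finset N) (x : M) :
    0 ≤ wLoss d lam i C x :=
  add_nonneg (mul_nonneg h0 (NNReal.coe_nonneg _))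
    (mul_nonneg (by linarith) (NNReal.coe_nonneg _))

lemma wLoss_bound {N M : Type*} (d : N ⊕ M → N ⊕ M → NNReal)
    (hd : IsPseudometric d) {lam : ℝ} (h0 : 0 < lam) (h1 : lam ≤ 1)
    {S S' : Finset N} (hsub : S' ⊆ S) {i j : N} (hi : i ∈ S) (hj : j ∈ S')
    (y : M) : wLoss d lam j S' y ≤ (2 / lam) * wLoss d lam i S y := by
  obtain ⟨hrefl, hsymm, htri⟩ := hd
  set a : NNReal := S.sup fun j' => d (Sum.inl i) (Sum.inl j') with ha
  have hia : ∀ j' ∈ S, d (Sum.inl i) (Sum.inl j') ≤ a := fun j' h => by rw [ha]; exact Finset.le_sup (f := fun j' => d (Sum.inl i) (Sum.inl j')) h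
  have hji : d (Sum.inl j) (Sum.inl i) ≤ a := by
    rw [hsymm]; exact hia j (hsub hj)
  have h2 : (S'.sup fun j' => d (Sum.inl j) (Sum.inl j')) ≤ a + a := by
    apply Finset.sup_le
    intro j' hj'
    calc d (Sum.inl j) (Sum.inl j')
        ≤ d (Sum.inl j) (Sum.inl i) + d (Sum.inl i) (Sum.inl j') := htri _ _ _
      _ ≤ a + a := add_le_add hji (hia j' (hsub hj'))
  have h3 : d (Sum.inl j) (Sum.inr y) ≤ a + d (Sum.inl i) (Sum.inr y) :=
    (htri (Sum.inl j) (Sum.inr y) (Sum.inl i)).trans (add_le_add hji le_rfl)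
  have h2' : ((S'.sup fun j' => d (Sum.inl j) (Sum.inl j') : NNReal) : ℝ)
      ≤ (a : ℝ) + (a : ℝ) := by exact_mod_cast h2
  have h3' : ((d (Sum.inl j) (Sum.inr y) : NNReal) : ℝ)
      ≤ (a : ℝ) + ((d (Sum.inl i) (Sum.inr y) : NNReal) : ℝ) := by exact_mod_cast h3
  set A : ℝ := ((S'.sup fun j' => d (Sum.inl j) (Sum.inl j') : NNReal) : ℝ)
  set B : ℝ := ((d (Sum.inl j) (Sum.inr y) : NNReal) : ℝ)
  set a' : ℝ := (a : ℝ)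
  set b : ℝ := ((d (Sum.inl i) (Sum.inr y) : NNReal) : ℝ)
  have ha0 : 0 ≤ a' := NNReal.coe_nonneg _
  have hb0 : 0 ≤ b := NNReal.coe_nonneg _
  show lam * A + (1 - lam) * B ≤ 2 / lam * (lam * a' + (1 - lam) * b)
  rw [div_mul_eq_mul_div, le_div_iff₀ h0]
  nlinarith [mul_le_mul_of_nonneg_left h2' h0.le,
    mul_le_mul_of_nonneg_left h3' (by nlinarith : (0:ℝ) ≤ (1 - lam) * lam),
    mul_nonneg (mul_nonneg (by linarith : (0:ℝ) ≤ 1 - lam) (by linarith : (0:ℝ) ≤ 1 - lam)) hb0,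
    mul_nonneg (mul_nonneg h0.le (by linarith : (0:ℝ) ≤ 1 - lam)) ha0]

/-- For every weighted single metric instance with `λ ∈ (0,1]` in which `k` divides `n`,
there exists a balanced clustering (every cluster of size exactly `n/k`) in the
`(2/λ)`-core. -/
theorem exists_balanced_core_weighted {N M : Type*} [Fintype N] [Nonempty N]
    [Fintype M] [Nonempty M] {k : ℕ} (hk : 1 ≤ k) (hdvd : k ∣ Fintype.card N)
    (d : N ⊕ M → N ⊕ M → NNReal) (hd : IsPseudometric d)
    (lam : ℝ) (hlam0 : 0 < lam) (hlam1 : lam ≤ 1) :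
    ∃ X : Clustering N M k,
      (∀ t : Fin k, (X.part t).card = Fintype.card N / k) ∧
      InCore X (wLoss d lam) (2 / lam) := by
    classical
  set n := Fintype.card N with hn
  set m := n / k with hm
  have hnm : n = k * m := by rw [hm, Nat.mul_div_cancel' hdvd]
  have hn1 : 1 ≤ n := Fintype.card_pos
  have hm1 : 1 ≤ m := by
    by_contra h
    push_neg at h
    interval_cases m
    omega
  -- the greedy objective
  set f : Finset N × M → NNReal := fun p =>
    p.1.sup fun j => ⟨wLoss d lam j p.1 p.2, wLoss_nonneg d hlam0.le hlam1 j p.1 p.2⟩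
    with hf
  -- the clustering
  have hcov : ∀ i : N, ∃ t, t < k ∧ i ∈ (pick f m (rem f m t)).1 :=
    cover f m k hnm
  set X : Clustering N M k :=
    { part := fun t => (pick f m (rem f m (t : ℕ))).1
      cent := fun t => (pick f m (rem f m (t : ℕ))).2
      partition := by
        intro i
        obtain ⟨t, htk, hit⟩ := hcov i
        refine ⟨⟨t, htk⟩, hit, ?_⟩
        rintro ⟨s, hsk⟩ his
        ext
        simp only
        rcases lt_trichotomy s t with h | h | h
        · exact absurd (disjointness f m k hnm hsk htk h his hit) not_false
        · exact h
        · exact absurd (disjointness f m k hnm htk hsk h hit his) not_false }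
    with hX
  refine ⟨X, ?_, ?_⟩
  · intro t
    exact (pick_spec f m (rem f m (t : ℕ))
      (rem_subset_card f m k hnm t.isLt)).2.1
  -- core property
  rintro ⟨S, y, hScard, hdev⟩
  have hkpos : (0 : ℝ) < (k : ℝ) := by exact_mod_cast hk
  have hmS : m ≤ S.card := by
    have hnk : ((n : ℝ)) / (k : ℝ) = (m : ℝ) := by
      rw [hnm]; push_cast; field_simp
    have : ((m : ℝ)) ≤ (S.card : ℝ) := hnk ▸ hScard
    exact_mod_cast this
  have hSne : S.Nonempty := Finset.card_pos.mp (by omega)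
  -- the first round touching S
  have hext : ∃ t, t < k ∧ (S ∩ (pick f m (rem f m t)).1).Nonempty := by
    obtain ⟨i0, hi0⟩ := hSne
    obtain ⟨t, htk, hit⟩ := hcov i0
    exact ⟨t, htk, ⟨i0, Finset.mem_inter.mpr ⟨hi0, hit⟩⟩⟩
  set t0 := Nat.find hext with ht0
  obtain ⟨ht0k, i, himem⟩ := Nat.find_spec hext
  obtain ⟨hiS, hipart⟩ := Finset.mem_inter.mp himem
  -- S is still fully available at round t0
  have hSrem : ∀ t ≤ t0, S ⊆ rem f m t := by
    intro t
    induction t with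
    | zero => intro _; intro x _; simp [rem]
    | succ t ih =>
      intro ht
      have ht' : t ≤ t0 := Nat.le_of_succ_le ht
      have hS_t := ih ht'
      intro x hx
      show x ∈ rem f m t \ (pick f m (rem f m t)).1
      rw [Finset.mem_sdiff]
      refine ⟨hS_t hx, fun hxp => ?_⟩
      have htlt : t < t0 := ht
      exact Nat.find_min hext htlt
        ⟨htlt.trans ht0k, ⟨x, Finset.mem_inter.mpr ⟨hx, hxp⟩⟩⟩
  have hSrem0 : S ⊆ rem f m t0 := hSrem t0 le_rfl
  -- choose a sub-coalition of size exactly m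
  obtain ⟨S', hS'sub, hS'card⟩ := Finset.exists_subset_card_eq hmS
  have hS'rem : S' ⊆ rem f m t0 := hS'sub.trans hSrem0
  -- the index of i is t0
  have hidx : X.idx i = ⟨t0, ht0k⟩ := by
    have h1 : i ∈ X.part (X.idx i) := (X.partition i).exists.choose_spec
    exact (X.partition i).unique h1 hipart
  -- losses
  have hloss : X.loss (wLoss d lam) i
      = wLoss d lam i (pick f m (rem f m t0)).1 (pick f m (rem f m t0)).2 := by
    rw [Clustering.loss, hidx]
  have hmin := (pick_spec f m (rem f m t0)
      (rem_subset_card f m k hnm ht0k)).2.2 S' y hS'rem hS'card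
  -- agent i's loss is at most the max loss in its cluster
  have hle1 : X.loss (wLoss d lam) i ≤ (f (pick f m (rem f m t0)) : ℝ) := by
    rw [hloss, hf]
    exact_mod_cast
      (Finset.le_sup (f := fun j => (⟨wLoss d lam j (pick f m (rem f m t0)).1
          (pick f m (rem f m t0)).2,
        wLoss_nonneg d hlam0.le hlam1 j _ _⟩ : NNReal)) hipart :
        (⟨wLoss d lam i (pick f m (rem f m t0)).1 (pick f m (rem f m t0)).2, _⟩ : NNReal)
          ≤ _)
  -- the max loss of the candidate (S', y) is at most (2/λ)·ℓ_i(S,y)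
  have hB0 : 0 ≤ 2 / lam * wLoss d lam i S y :=
    mul_nonneg (by positivity) (wLoss_nonneg d hlam0.le hlam1 i S y)
  have hle2 : (f (S', y) : ℝ) ≤ 2 / lam * wLoss d lam i S y := by
    rw [hf]
    have : (f (S', y)) ≤ (⟨2 / lam * wLoss d lam i S y, hB0⟩ : NNReal) := by
      apply Finset.sup_le
      intro j hj
      exact NNReal.coe_le_coe.mp (wLoss_bound d hd hlam0 hlam1 hS'sub hiS hj y)
    exact_mod_cast this
  have hdevi := hdev i hiS
  have hchain : X.loss (wLoss d lam) i ≤ 2 / lam * wLoss d lam i S y := by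
    calc X.loss (wLoss d lam) i ≤ (f (pick f m (rem f m t0)) : ℝ) := hle1
      _ ≤ (f (S', y) : ℝ) := by exact_mod_cast hmin
      _ ≤ 2 / lam * wLoss d lam i S y := hle2
  linarith
end
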